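/- arXiv:1507.05338 — 2 statements merged into one kernel-verified Lean document; each statement's English description precedes it below -/
import Mathlib

section
/- Let n ≥ 3, k < n, and let G be an n-vertex graph such that d(u) + d(v) ≥ n + k for every pair of nonadjacent distinct vertices u, v. Then for every linear forest F with k edges contained in G, G has a Hamiltonian cycle containing all edges of F. -/
set_option linter.unusedSectionVars false
set_option linter.unusedVariables false
set_option maxHeartbeats 1000000

/-- A linear forest: a graph all of whose components are paths, i.e. every
vertex has at most two neighbors and there are no cycles. -/
def IsLinearForest {V : Type*} (F : SimpleGraph V) : Prop :=
  (∀ v : V, (F.neighborSet v).ncard ≤ 2) ∧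
    ∀ (v : V) (w : F.Walk v v), ¬ w.IsCycle

open SimpleGraph

section Aux
variable {V : Type*} [Fintype V] [DecidableEq V] [Nonempty V]

noncomputable def cg (l : List V) (i : ℕ) : V := l.getD i (Classical.arbitrary V)

lemma cg_eq (l : List V) (i : ℕ) (h : i < l.length) : cg l i = l[i] :=
  List.getD_eq_getElem l _ h

lemma cg_inj {l : List V} (hl : l.Nodup) {i j : ℕ} (hi : i < l.length) (hj : j < l.length)
    (h : cg l i = cg l j) : i = j := by
  rw [cg_eq _ _ hi, cg_eq _ _ hj] at h
  exact (hl.getElem_inj_iff).mp h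

structure CycL (G F : SimpleGraph V) (l : List V) : Prop where
  nodup : l.Nodup
  mem : ∀ x : V, x ∈ l
  len3 : 3 ≤ l.length
  adj : ∀ i, i < l.length → G.Adj (cg l i) (cg l ((i+1) % l.length))
  fedge : ∀ e ∈ F.edgeSet, ∃ i, i < l.length ∧ e = s(cg l i, cg l ((i+1) % l.length))

lemma infix_split {a b v : V} : ∀ (A : List V) (B : List V), a ≠ v → b ≠ v →
    [a,b] <:+: A ++ v :: B → [a,b] <:+: A ∨ [a,b] <:+: B := by
  intro A
  induction A with
  | nil =>
    intro B ha hb h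
    rcases List.infix_cons_iff.mp h with h' | h'
    · obtain ⟨t, ht⟩ := h'
      simp at ht
      exact absurd ht.1.symm (Ne.symm ha)
    · exact Or.inr h'
  | cons c A' ih =>
    intro B ha hb h
    rcases List.infix_cons_iff.mp h with h' | h'
    · obtain ⟨t, ht⟩ := h'
      rw [List.cons_append, List.cons_append] at ht
      injection ht with h1 ht
      subst h1
      cases A' with
      | nil =>
        simp at ht
        exact absurd ht.1.symm (Ne.symm hb)
      | cons d A'' =>
        simp only [List.append_eq, List.cons_append, List.nil_append] at ht
        injection ht with h2 ht
        subst h2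
        exact Or.inl ⟨[], A'', rfl⟩
    · rcases ih B ha hb h' with h'' | h''
      · left
        obtain ⟨s, t, rfl⟩ := h''
        exact ⟨c :: s, t, rfl⟩
      · exact Or.inr h''


lemma infix_pair_index {l : List V} {a b : V} (h : [a,b] <:+: l) :
    ∃ i, i + 1 < l.length ∧ cg l i = a ∧ cg l (i+1) = b := by
  obtain ⟨s, t, hst⟩ := h
  have hl : l = s ++ a :: b :: t := by rw [← hst]; simp
  subst hl
  have h1 : s.length + 1 < (s ++ a :: b :: t).length := by simp
  refine ⟨s.length, h1, ?_, ?_⟩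
  · rw [cg_eq _ _ (by simp), List.getElem_append_right (le_refl _)]
    simp
  · rw [cg_eq _ _ h1, List.getElem_append_right (by omega)]
    simp

lemma exists_leaf (F : SimpleGraph V) (hF : IsLinearForest F) (hne : F.edgeSet.Nonempty) :
    ∃ w z : V, F.neighborSet w = {z} := by
  classical
  set S : Set ℕ := {m | ∃ (u w : V) (p : F.Walk u w), p.IsPath ∧ p.length = m} with hS
  have hadj : ∃ u v : V, F.Adj u v := by
    obtain ⟨e, he⟩ := hne
    induction e with
    | _ u v => exact ⟨u, v, he⟩
  obtain ⟨u, v, huv⟩ := hadj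
  have h1S : 1 ∈ S := ⟨u, v, Walk.cons huv Walk.nil, by simp [huv.ne], by simp⟩
  have hbd : ∀ m ∈ S, m ≤ Fintype.card V := by
    rintro m ⟨u, w, p, hp, rfl⟩
    exact hp.length_lt.le
  set N := Nat.findGreatest (· ∈ S) (Fintype.card V) with hN
  have hNS : N ∈ S := Nat.findGreatest_spec (hbd 1 h1S) h1S
  have hN1 : 1 ≤ N := Nat.le_findGreatest (hbd 1 h1S) h1S
  obtain ⟨a, c0, p0, hp0, hlen0⟩ := hNS
  have hrp : p0.reverse.IsPath := hp0.reverse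
  have hrlen : p0.reverse.length = N := by simp [hlen0]
  revert hrp hrlen
  generalize p0.reverse = r
  intro hrp hrlen
  cases r with
  | nil => simp at hrlen; omega
  | @cons _ z _ hcz q =>
    rename_i cc
    -- hcz : F.Adj c0 z, q : F.Walk z a
    have hq : q.IsPath ∧ c0 ∉ q.support := by
      rw [Walk.cons_isPath_iff] at hrp
      exact hrp
    refine ⟨c0, z, ?_⟩
    ext b
    simp only [mem_neighborSet, Set.mem_singleton_iff]
    constructor
    · intro hcb
      by_contra hbz
      by_cases hbs : b ∈ (Walk.cons hcz q).support
      · -- b on the path: construct a cycle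
        have hbq : b ∈ q.support := by
          rw [Walk.support_cons] at hbs
          rcases List.mem_cons.mp hbs with h | h
          · exact absurd h hcb.ne'
          · exact h
        have hr1p : (q.takeUntil b hbq).IsPath := hq.1.takeUntil hbq
        have hcr1 : c0 ∉ (q.takeUntil b hbq).support :=
          fun hc => hq.2 (Walk.support_takeUntil_subset _ hbq hc)
        have hpath : (Walk.cons hcz (q.takeUntil b hbq)).IsPath := by
          rw [Walk.cons_isPath_iff]
          exact ⟨hr1p, hcr1⟩
        have hcyc : (Walk.cons hcb.symm (Walk.cons hcz (q.takeUntil b hbq))).IsCycle := by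
          rw [SimpleGraph.Walk.cons_isCycle_iff]
          refine ⟨hpath, ?_⟩
          intro hmem
          simp only [Walk.edges_cons] at hmem
          rcases List.mem_cons.mp hmem with h | h
          · rw [Sym2.eq_iff] at h
            rcases h with ⟨h1, h2⟩ | ⟨h1, h2⟩
            · exact hcb.ne' h1
            · exact hbz h1
          · exact hcr1 (Walk.snd_mem_support_of_mem_edges _ h)
        exact hF.2 b _ hcyc
      · -- extend the path
        have hpath : (Walk.cons hcb.symm (Walk.cons hcz q)).IsPath := by
          rw [Walk.cons_isPath_iff]
          exact ⟨hrp, hbs⟩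
        rw [Walk.length_cons] at hrlen
        have hmem : N + 1 ∈ S := ⟨b, a, _, hpath, by
          rw [Walk.length_cons, Walk.length_cons]; omega⟩
        have h3 : N + 1 ≤ N := Nat.le_findGreatest (hbd _ hmem) hmem
        omega
    · rintro rfl
      exact hcz

lemma IsLinearForest.anti {F F' : SimpleGraph V} (h : F' ≤ F) (hF : IsLinearForest F) :
    IsLinearForest F' := by
  constructor
  · intro v
    exact le_trans (Set.ncard_le_ncard (fun x hx => h hx) (Set.toFinite _)) (hF.1 v)
  · intro v w hc
    exact hF.2 v (w.transfer F (fun e he => SimpleGraph.edgeSet_mono h (w.edges_subset_edgeSet he)))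
      (hc.transfer _)


lemma linear_forest_list : ∀ (K : ℕ) (F : SimpleGraph V), F.edgeSet.ncard ≤ K →
    IsLinearForest F →
    ∃ l : List V, l.Nodup ∧ (∀ x : V, x ∈ l) ∧
      ∀ e ∈ F.edgeSet, ∃ a b, s(a,b) = e ∧ [a,b] <:+: l := by
  intro K
  induction K with
  | zero =>
    intro F hK _
    have hE : F.edgeSet = ∅ := (Set.ncard_eq_zero (Set.toFinite _)).mp (by omega)
    refine ⟨Finset.univ.toList, Finset.nodup_toList _, fun x => by simp, ?_⟩
    intro e he
    rw [hE] at he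
    exact absurd he (Set.notMem_empty e)
  | succ K ih =>
    intro F hK hF
    rcases Set.eq_empty_or_nonempty F.edgeSet with hE | hne
    · refine ⟨Finset.univ.toList, Finset.nodup_toList _, fun x => by simp, ?_⟩
      intro e he
      rw [hE] at he
      exact absurd he (Set.notMem_empty e)
    obtain ⟨w, z, hwz⟩ := exists_leaf F hF hne
    have hadj : F.Adj w z := by
      have : z ∈ F.neighborSet w := by rw [hwz]; rfl
      exact this
    set F' := F.deleteEdges {s(w,z)} with hF'def
    have hle : F' ≤ F := SimpleGraph.deleteEdges_le _
    have hE' : F'.edgeSet = F.edgeSet \ {s(w,z)} := SimpleGraph.edgeSet_deleteEdges _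
    have hmemE : s(w,z) ∈ F.edgeSet := hadj
    have hcard : F'.edgeSet.ncard ≤ K := by
      rw [hE', Set.ncard_diff_singleton_of_mem hmemE]
      have h1 : 0 < F.edgeSet.ncard := (Set.ncard_pos (Set.toFinite _)).mpr hne
      omega
    obtain ⟨l', hnd', hmem', hedge'⟩ := ih F' hcard (IsLinearForest.anti hle hF)
    have hwF' : ∀ a, ¬ F'.Adj w a := by
      intro a ha
      rw [hF'def, SimpleGraph.deleteEdges_adj] at ha
      have haz : a = z := by
        have : a ∈ F.neighborSet w := ha.1
        rw [hwz] at this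
        exact this
      exact ha.2 (by rw [haz]; rfl)
    have hzF' : ∀ a b, F'.Adj z a → F'.Adj z b → a = b := by
      intro a b ha hb
      by_contra hab
      have haw : a ≠ w := fun h => hwF' z (h ▸ ha).symm
      have hbw : b ≠ w := fun h => hwF' z (h ▸ hb).symm
      have hsub : ({w, a, b} : Set V) ⊆ F.neighborSet z := by
        intro x hx
        rcases hx with rfl | rfl | rfl
        · exact hadj.symm
        · exact hle ha
        · exact hle hb
      have h3 : ({w, a, b} : Set V).ncard = 3 := by
        rw [Set.ncard_insert_of_notMem (by simp [Ne.symm haw, Ne.symm hbw]) (Set.toFinite _),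
          Set.ncard_insert_of_notMem (by simp [hab]) (Set.toFinite _), Set.ncard_singleton]
      have h4 := Set.ncard_le_ncard hsub (Set.toFinite _)
      have h2 := hF.1 z
      omega
    -- adjacency from F'-edge reps
    have hrepadj : ∀ {a b : V} (e : Sym2 V), e ∈ F'.edgeSet → s(a,b) = e → F'.Adj a b := by
      intro a b e he hab
      rw [← hab] at he
      exact he
    obtain ⟨A, B, hAB⟩ := List.append_of_mem (hmem' w)
    have hndw : (w :: (A ++ B)).Nodup := by
      rw [hAB, List.nodup_middle] at hnd'
      exact hnd'
    have hedge'' : ∀ e ∈ F'.edgeSet, ∃ a b, s(a,b) = e ∧ [a,b] <:+: A ++ B := by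
      intro e he
      obtain ⟨a, b, hab, hinf⟩ := hedge' e he
      have hadjab : F'.Adj a b := hrepadj e he hab
      have haw : a ≠ w := by
        rintro rfl
        exact hwF' b hadjab
      have hbw : b ≠ w := by
        rintro rfl
        exact hwF' a hadjab.symm
      rw [hAB] at hinf
      rcases infix_split A B haw hbw hinf with h | h
      · exact ⟨a, b, hab, h.trans (List.prefix_append A B).isInfix⟩
      · exact ⟨a, b, hab, h.trans (List.suffix_append A B).isInfix⟩
    have hzAB : z ∈ A ++ B := by
      have h1 : z ∈ l' := hmem' z
      rw [hAB] at h1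
      rcases List.mem_append.mp h1 with h | h
      · exact List.mem_append.mpr (Or.inl h)
      · rcases List.mem_cons.mp h with h2 | h2
        · exact absurd h2.symm hadj.ne
        · exact List.mem_append.mpr (Or.inr h2)
    -- final edge set fact
    have hFsplit : ∀ e ∈ F.edgeSet, e = s(w,z) ∨ e ∈ F'.edgeSet := by
      intro e he
      by_cases h : e = s(w,z)
      · exact Or.inl h
      · exact Or.inr (by rw [hE']; exact ⟨he, h⟩)
    by_cases hz : ∃ a, F'.Adj z a
    · obtain ⟨a0, ha0⟩ := hz
      obtain ⟨a, b, hab, hinf⟩ := hedge'' s(z,a0) (by exact ha0)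
      rcases Sym2.eq_iff.mp hab with ⟨h1, h2⟩ | ⟨h1, h2⟩
      · rw [h1, h2] at hinf
        -- [z, a0] <:+: A ++ B ; insert w before z
        obtain ⟨s, t, hst⟩ := hinf
        have hst' : A ++ B = s ++ z :: a0 :: t := by rw [← hst]; simp
        have hp : (s ++ w :: z :: a0 :: t).Perm (w :: (A ++ B)) := by
          rw [hst']
          exact List.perm_middle
        refine ⟨s ++ w :: z :: a0 :: t, hp.nodup_iff.mpr hndw, ?_, ?_⟩
        · intro x
          rw [hp.mem_iff]
          have h1 : x ∈ l' := hmem' x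
          rw [hAB] at h1
          rw [List.mem_cons, List.mem_append]
          rcases List.mem_append.mp h1 with h | h
          · exact Or.inr (Or.inl h)
          · rcases List.mem_cons.mp h with h2 | h2
            · exact Or.inl h2
            · exact Or.inr (Or.inr h2)
        · intro e he
          rcases hFsplit e he with rfl | he'
          · exact ⟨w, z, rfl, ⟨s, a0 :: t, by simp⟩⟩
          · obtain ⟨c, d, hcd, hinf2⟩ := hedge'' e he'
            have hadjcd : F'.Adj c d := hrepadj e he' hcd
            by_cases hcz : c = z
            · have hda : d = a0 := hzF' d a0 (hcz ▸ hadjcd) ha0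
              exact ⟨z, a0, by rw [← hcz, ← hda]; exact hcd, ⟨s ++ [w], t, by simp⟩⟩
            · by_cases hdz : d = z
              · have hca : c = a0 := hzF' c a0 (hdz ▸ hadjcd.symm) ha0
                exact ⟨z, a0, by rw [← hdz, ← hca, Sym2.eq_swap]; exact hcd,
                  ⟨s ++ [w], t, by simp⟩⟩
              · rw [hst'] at hinf2
                rcases infix_split s (a0 :: t) hcz hdz hinf2 with h | h
                · exact ⟨c, d, hcd, h.trans (List.prefix_append s _).isInfix⟩
                · refine ⟨c, d, hcd, h.trans ?_⟩
                  have heq : s ++ w :: z :: a0 :: t = (s ++ [w, z]) ++ a0 :: t := by simp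
                  rw [heq]
                  exact (List.suffix_append _ _).isInfix
      · rw [h1, h2] at hinf
        -- [a0, z] <:+: A ++ B ; insert w after z
        obtain ⟨s, t, hst⟩ := hinf
        have hst' : A ++ B = s ++ a0 :: z :: t := by rw [← hst]; simp
        have hp : (s ++ a0 :: z :: w :: t).Perm (w :: (A ++ B)) := by
          rw [hst']
          have e1 : s ++ a0 :: z :: w :: t = (s ++ [a0, z]) ++ w :: t := by simp
          have e2 : (s ++ [a0, z]) ++ t = s ++ a0 :: z :: t := by simp
          rw [e1, ← e2]
          exact List.perm_middle
        refine ⟨s ++ a0 :: z :: w :: t, hp.nodup_iff.mpr hndw, ?_, ?_⟩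
        · intro x
          rw [hp.mem_iff]
          have h1 : x ∈ l' := hmem' x
          rw [hAB] at h1
          rw [List.mem_cons, List.mem_append]
          rcases List.mem_append.mp h1 with h | h
          · exact Or.inr (Or.inl h)
          · rcases List.mem_cons.mp h with h2 | h2
            · exact Or.inl h2
            · exact Or.inr (Or.inr h2)
        · intro e he
          rcases hFsplit e he with rfl | he'
          · exact ⟨z, w, Sym2.eq_swap, ⟨s ++ [a0], t, by simp⟩⟩
          · obtain ⟨c, d, hcd, hinf2⟩ := hedge'' e he'
            have hadjcd : F'.Adj c d := hrepadj e he' hcd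
            by_cases hcz : c = z
            · have hda : d = a0 := hzF' d a0 (hcz ▸ hadjcd) ha0
              exact ⟨a0, z, by rw [← hcz, ← hda, Sym2.eq_swap]; exact hcd,
                ⟨s, w :: t, by simp⟩⟩
            · by_cases hdz : d = z
              · have hca : c = a0 := hzF' c a0 (hdz ▸ hadjcd.symm) ha0
                exact ⟨a0, z, by rw [← hdz, ← hca]; exact hcd, ⟨s, w :: t, by simp⟩⟩
              · rw [hst'] at hinf2
                have hst2 : s ++ a0 :: z :: t = (s ++ [a0]) ++ z :: t := by simp
                rw [hst2] at hinf2
                rcases infix_split (s ++ [a0]) t hcz hdz hinf2 with h | h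
                · refine ⟨c, d, hcd, h.trans ?_⟩
                  have heq : s ++ a0 :: z :: w :: t = (s ++ [a0]) ++ z :: w :: t := by simp
                  rw [heq]
                  exact (List.prefix_append _ _).isInfix
                · refine ⟨c, d, hcd, h.trans ?_⟩
                  have heq : s ++ a0 :: z :: w :: t = (s ++ [a0, z, w]) ++ t := by simp
                  rw [heq]
                  exact (List.suffix_append _ _).isInfix
    · -- z has no F'-neighbors : insert w after z anywhere
      obtain ⟨C, D, hCD⟩ := List.append_of_mem hzAB
      refine ⟨C ++ z :: w :: D, ?_, ?_, ?_⟩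
      · have hp : (C ++ z :: w :: D).Perm (w :: (A ++ B)) := by
          rw [hCD]
          have e1 : C ++ z :: w :: D = (C ++ [z]) ++ w :: D := by simp
          have e2 : (C ++ [z]) ++ D = C ++ z :: D := by simp
          rw [e1, ← e2]
          exact List.perm_middle
        exact hp.nodup_iff.mpr hndw
      · intro x
        have hp : (C ++ z :: w :: D).Perm (w :: (A ++ B)) := by
          rw [hCD]
          have e1 : C ++ z :: w :: D = (C ++ [z]) ++ w :: D := by simp
          have e2 : (C ++ [z]) ++ D = C ++ z :: D := by simp
          rw [e1, ← e2]
          exact List.perm_middle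
        rw [hp.mem_iff]
        have h1 : x ∈ l' := hmem' x
        rw [hAB] at h1
        rw [List.mem_cons, List.mem_append]
        rcases List.mem_append.mp h1 with h | h
        · exact Or.inr (Or.inl h)
        · rcases List.mem_cons.mp h with h2 | h2
          · exact Or.inl h2
          · exact Or.inr (Or.inr h2)
      · intro e he
        rcases hFsplit e he with rfl | he'
        · exact ⟨z, w, Sym2.eq_swap, ⟨C, D, by simp⟩⟩
        · obtain ⟨c, d, hcd, hinf2⟩ := hedge'' e he'
          have hadjcd : F'.Adj c d := hrepadj e he' hcd
          have hcz : c ≠ z := by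
            rintro rfl
            exact hz ⟨d, hadjcd⟩
          have hdz : d ≠ z := by
            rintro rfl
            exact hz ⟨c, hadjcd.symm⟩
          rw [hCD] at hinf2
          rcases infix_split C D hcz hdz hinf2 with h | h
          · exact ⟨c, d, hcd, h.trans (List.prefix_append C _).isInfix⟩
          · refine ⟨c, d, hcd, h.trans ?_⟩
            have : C ++ z :: w :: D = (C ++ [z, w]) ++ D := by simp
            rw [this]
            exact (List.suffix_append _ _).isInfix

lemma nodup_mem_length {l : List V} (h1 : l.Nodup) (h2 : ∀ x : V, x ∈ l) :
    l.length = Fintype.card V := by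
  rw [← List.toFinset_card_of_nodup h1]
  rw [show l.toFinset = Finset.univ from by ext x; simp [h2 x]]
  simp

lemma CycL.length_eq {G F : SimpleGraph V} {l : List V} (h : CycL G F l) :
    l.length = Fintype.card V := nodup_mem_length h.nodup h.mem

lemma cg_rotate (l : List V) (m i : ℕ) (h : i < l.length) :
    cg (l.rotate m) i = cg l ((i + m) % l.length) := by
  have h1 : i < (l.rotate m).length := by simpa using h
  have h2 : (i + m) % l.length < l.length := Nat.mod_lt _ (by omega)
  rw [cg_eq _ _ h1, cg_eq _ _ h2, List.getElem_rotate]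

lemma exists_rot_index (n m : ℕ) (hn : 0 < n) (j : ℕ) (hj : j < n) :
    ∃ i, i < n ∧ (i + m) % n = j := by
  refine ⟨(j + (n - m % n)) % n, Nat.mod_lt _ hn, ?_⟩
  rw [Nat.mod_add_mod]
  have h1 : m % n < n := Nat.mod_lt _ hn
  have h2 : m % n + n * (m / n) = m := Nat.mod_add_div m n
  have h3 : j + (n - m % n) + m = j + n + n * (m / n) := by omega
  rw [h3, show j + n + n * (m / n) = j + n * (1 + m / n) by ring,
    Nat.add_mul_mod_self_left, Nat.mod_eq_of_lt hj]

lemma CycL.rotate {G F : SimpleGraph V} {l : List V} (h : CycL G F l) (m : ℕ) :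
    CycL G F (l.rotate m) := by
  have hn : 0 < l.length := by have := h.len3; omega
  have hlen : (l.rotate m).length = l.length := List.length_rotate l m
  have hkey : ∀ i, i < l.length →
      cg (l.rotate m) i = cg l ((i + m) % l.length) ∧
      cg (l.rotate m) ((i+1) % l.length) = cg l (((i + m) % l.length + 1) % l.length) := by
    intro i hi
    constructor
    · exact cg_rotate l m i hi
    · rw [cg_rotate l m _ (Nat.mod_lt _ hn), Nat.mod_add_mod, Nat.add_right_comm,
        ← Nat.mod_add_mod (i+m)]
  refine ⟨(List.nodup_rotate).mpr h.nodup, fun x => (List.mem_rotate).mpr (h.mem x),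
    by rw [hlen]; exact h.len3, ?_, ?_⟩
  · intro i hi
    rw [hlen] at hi ⊢
    rw [(hkey i hi).1, (hkey i hi).2]
    exact h.adj _ (Nat.mod_lt _ hn)
  · intro e he
    obtain ⟨j, hj, hje⟩ := h.fedge e he
    obtain ⟨i, hi, hij⟩ := exists_rot_index l.length m hn j hj
    refine ⟨i, by omega, ?_⟩
    rw [hlen, (hkey i hi).1, (hkey i hi).2, hij, hje]

lemma complete_case (n k : ℕ) (hcard : Fintype.card V = n) (hn3 : 3 ≤ n)
    (G F : SimpleGraph V) (hF : IsLinearForest F)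
    (hcompl : ∀ u v : V, u ≠ v → G.Adj u v) : ∃ l, CycL G F l := by
  obtain ⟨l, hnd, hmem, hedge⟩ :=
    linear_forest_list (F.edgeSet.ncard) F le_rfl hF
  have hlen : l.length = n := by rw [nodup_mem_length hnd hmem, hcard]
  have hne : ∀ i j, i < l.length → j < l.length → i ≠ j → cg l i ≠ cg l j := by
    intro i j hi hj hij hc
    exact hij (cg_inj hnd hi hj hc)
  refine ⟨l, hnd, hmem, by omega, ?_, ?_⟩
  · intro i hi
    apply hcompl
    by_cases h : i + 1 < l.length
    · rw [Nat.mod_eq_of_lt h]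
      exact hne i (i+1) hi h (by omega)
    · have : i = l.length - 1 := by omega
      have h0 : (i + 1) % l.length = 0 := by
        rw [this]
        rw [show l.length - 1 + 1 = l.length by omega, Nat.mod_self]
      rw [h0]
      exact hne i 0 hi (by omega) (by omega)
  · intro e he
    obtain ⟨a, b, hab, hinf⟩ := hedge e he
    obtain ⟨i, hi, ha, hb⟩ := infix_pair_index hinf
    refine ⟨i, by omega, ?_⟩
    rw [Nat.mod_eq_of_lt hi, ha, hb, hab]

lemma crossing (G F : SimpleGraph V) (n k : ℕ) (hn3 : 3 ≤ n)
    (hFG : F ≤ G) (hFk : F.edgeSet.ncard = k)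
    (p : List V) (hnd : p.Nodup) (hmem : ∀ x : V, x ∈ p) (hlen : p.length = n)
    (x y : V) (hx : cg p 0 = x) (hy : cg p (n-1) = y)
    (hxy : ¬ G.Adj x y)
    (hdeg : n + k ≤ (G.neighborSet x).ncard + (G.neighborSet y).ncard)
    (hadj : ∀ i, i + 1 < n → G.Adj (cg p i) (cg p (i+1)))
    (hFp : ∀ e ∈ F.edgeSet, ∃ i, i + 1 < n ∧ e = s(cg p i, cg p (i+1))) :
    ∃ l, CycL G F l := by
  classical
  have hmemidx : ∀ w : V, ∃ i, i < n ∧ cg p i = w := by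
    intro w
    obtain ⟨i, hi, hw⟩ := List.mem_iff_getElem.mp (hmem w)
    exact ⟨i, by omega, by rw [cg_eq _ _ hi, hw]⟩
  set A : Finset ℕ := (Finset.range (n-1)).filter (fun i => G.Adj y (cg p i)) with hA
  set B : Finset ℕ := (Finset.range (n-1)).filter (fun i => G.Adj x (cg p (i+1))) with hB
  set Bad : Finset ℕ :=
    (Finset.range (n-1)).filter (fun i => s(cg p i, cg p (i+1)) ∈ F.edgeSet) with hBad
  have hAcard : A.card = (G.neighborSet y).ncard := by
    rw [Set.ncard_eq_toFinset_card']
    apply Finset.card_bij (fun i _ => cg p i)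
    · intro a ha
      simp only [hA, Finset.mem_filter] at ha
      simp only [Set.mem_toFinset, mem_neighborSet]
      exact ha.2
    · intro a ha b hb hab
      simp only [hA, Finset.mem_filter, Finset.mem_range] at ha hb
      exact cg_inj hnd (by omega) (by omega) hab
    · intro w hw
      simp only [Set.mem_toFinset, mem_neighborSet] at hw
      obtain ⟨i, hi, hiw⟩ := hmemidx w
      have hine : i ≠ n - 1 := by
        intro h
        rw [h, hy] at hiw
        exact G.irrefl (hiw ▸ hw)
      refine ⟨i, ?_, hiw⟩
      simp only [hA, Finset.mem_filter, Finset.mem_range]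
      exact ⟨by omega, hiw.symm ▸ hw⟩
  have hBcard : B.card = (G.neighborSet x).ncard := by
    rw [Set.ncard_eq_toFinset_card']
    apply Finset.card_bij (fun i _ => cg p (i+1))
    · intro a ha
      simp only [hB, Finset.mem_filter] at ha
      simp only [Set.mem_toFinset, mem_neighborSet]
      exact ha.2
    · intro a ha b hb hab
      simp only [hB, Finset.mem_filter, Finset.mem_range] at ha hb
      have := cg_inj hnd (i := a+1) (j := b+1) (by omega) (by omega) hab
      omega
    · intro w hw
      simp only [Set.mem_toFinset, mem_neighborSet] at hw
      obtain ⟨i, hi, hiw⟩ := hmemidx w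
      have hine : i ≠ 0 := by
        intro h
        rw [h, hx] at hiw
        exact G.irrefl (hiw ▸ hw)
      refine ⟨i - 1, ?_, by rw [show i - 1 + 1 = i by omega]; exact hiw⟩
      simp only [hB, Finset.mem_filter, Finset.mem_range]
      rw [show i - 1 + 1 = i by omega]
      exact ⟨by omega, hiw.symm ▸ hw⟩
  have hBadcard : Bad.card ≤ k := by
    have hinj : Set.InjOn (fun i => s(cg p i, cg p (i+1))) Bad := by
      intro a ha b hb hab
      simp only [hBad, Finset.coe_filter, Set.mem_setOf_eq, Finset.mem_range] at ha hb
      rcases Sym2.eq_iff.mp hab with ⟨h1, h2⟩ | ⟨h1, h2⟩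
      · exact cg_inj hnd (by omega) (by omega) h1
      · have e1 := cg_inj hnd (i := a) (j := b+1) (by omega) (by omega) h1
        have e2 := cg_inj hnd (i := a+1) (j := b) (by omega) (by omega) h2
        omega
    calc Bad.card ≤ F.edgeSet.toFinset.card := by
          apply Finset.card_le_card_of_injOn (fun i => s(cg p i, cg p (i+1)))
          · intro a ha
            simp only [hBad, Finset.coe_filter, Set.mem_setOf_eq] at ha
            simp only [Set.mem_toFinset]
            exact Finset.mem_coe.mpr (Set.mem_toFinset.mpr ha.2)
          · exact hinj
      _ = k := by rw [← Set.ncard_eq_toFinset_card', hFk]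
  have hunion : (A ∪ B).card ≤ n - 1 := by
    calc (A ∪ B).card ≤ (Finset.range (n-1)).card := by
          apply Finset.card_le_card
          intro i hi
          rcases Finset.mem_union.mp hi with h | h
          · exact (Finset.mem_filter.mp h).1
          · exact (Finset.mem_filter.mp h).1
      _ = n - 1 := Finset.card_range _
  have hids : (A ∪ B).card + (A ∩ B).card = A.card + B.card :=
    Finset.card_union_add_card_inter A B
  have hsub : (A ∩ B).card ≤ ((A ∩ B) \ Bad).card + Bad.card := by
    calc (A ∩ B).card ≤ (((A ∩ B) \ Bad) ∪ Bad).card := by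
          apply Finset.card_le_card
          intro i hi
          by_cases h : i ∈ Bad
          · exact Finset.mem_union.mpr (Or.inr h)
          · exact Finset.mem_union.mpr (Or.inl (Finset.mem_sdiff.mpr ⟨hi, h⟩))
      _ ≤ ((A ∩ B) \ Bad).card + Bad.card := Finset.card_union_le _ _
  have hTne : (((A ∩ B)) \ Bad).Nonempty := by
    rw [← Finset.card_pos]
    omega
  obtain ⟨j, hj⟩ := hTne
  rw [Finset.mem_sdiff, Finset.mem_inter] at hj
  obtain ⟨⟨hjA, hjB⟩, hjBad⟩ := hj
  have hjr : j < n - 1 := Finset.mem_range.mp (Finset.mem_filter.mp hjA).1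
  have hyj : G.Adj y (cg p j) := (Finset.mem_filter.mp hjA).2
  have hxj : G.Adj x (cg p (j+1)) := (Finset.mem_filter.mp hjB).2
  have hnFj : s(cg p j, cg p (j+1)) ∉ F.edgeSet := by
    intro h
    exact hjBad (Finset.mem_filter.mpr ⟨Finset.mem_range.mpr hjr, h⟩)
  -- construct the new cyclic list
  set m : List V := p.take (j+1) ++ (p.drop (j+1)).reverse with hm
  have hmlen : m.length = n := by
    simp only [hm, List.length_append, List.length_take, List.length_reverse,
      List.length_drop, hlen]
    omega
  have hmg : ∀ i, i < n → cg m i = if i ≤ j then cg p i else cg p (n + j - i) := by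
    intro i hi
    rw [hm]
    have hil : i < (p.take (j+1) ++ (p.drop (j+1)).reverse).length := by
      simp only [List.length_append, List.length_take, List.length_reverse,
        List.length_drop, hlen]
      omega
    rw [cg_eq _ _ hil]
    by_cases h : i ≤ j
    · rw [if_pos h]
      have h1 : i < (p.take (j+1)).length := by
        rw [List.length_take]; omega
      rw [List.getElem_append_left h1, List.getElem_take, cg_eq _ _ (by omega)]
    · rw [if_neg h]
      have h1 : (p.take (j+1)).length ≤ i := by
        rw [List.length_take]; omega
      have h2 : n + j - i < p.length := by omega
      rw [List.getElem_append_right h1, List.getElem_reverse, List.getElem_drop,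
        cg_eq _ _ h2]
      congr 1
      simp only [List.length_drop, List.length_take, List.length_reverse, hlen]
      omega
  have hperm : m.Perm p := by
    rw [hm]
    have h1 := List.Perm.append_left (p.take (j+1)) (List.reverse_perm (p.drop (j+1)))
    rwa [List.take_append_drop] at h1
  refine ⟨m, hperm.nodup_iff.mpr hnd, fun w => hperm.mem_iff.mpr (hmem w), by omega, ?_, ?_⟩
  · intro i hi
    rw [hmlen] at hi ⊢
    rcases Nat.lt_or_ge i (n-1) with hin | hin
    · rw [Nat.mod_eq_of_lt (by omega : i + 1 < n)]
      rcases Nat.lt_or_ge i j with hij | hij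
      · rw [hmg i (by omega), hmg (i+1) (by omega), if_pos (by omega), if_pos (by omega)]
        exact hadj i (by omega)
      · rcases Nat.eq_or_lt_of_le hij with heq | hij'
        · rw [hmg i (by omega), hmg (i+1) (by omega), if_pos (by omega), if_neg (by omega),
            show n + j - (i+1) = n - 1 by omega, hy]
          rw [← heq]
          exact hyj.symm
        · rw [hmg i (by omega), hmg (i+1) (by omega), if_neg (by omega), if_neg (by omega)]
          have := hadj (n + j - (i+1)) (by omega)
          rw [show n + j - (i+1) + 1 = n + j - i by omega] at this
          exact this.symm
    · have hieq : i = n - 1 := by omega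
      have h0 : (i + 1) % n = 0 := by
        rw [hieq, show n - 1 + 1 = n by omega, Nat.mod_self]
      rw [h0, hieq, hmg (n-1) (by omega), hmg 0 (by omega),
        if_neg (by omega : ¬(n - 1 ≤ j)), if_pos (Nat.zero_le j),
        show n + j - (n-1) = j + 1 by omega, hx]
      exact hxj.symm
  · intro e he
    obtain ⟨i, hi, hie⟩ := hFp e he
    have hij : i ≠ j := by
      rintro rfl
      rw [← hie] at hnFj
      exact hnFj he
    rw [hmlen]
    rcases Nat.lt_or_ge i j with h | h
    · refine ⟨i, by omega, ?_⟩
      rw [Nat.mod_eq_of_lt (by omega : i + 1 < n), hmg i (by omega), hmg (i+1) (by omega),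
        if_pos (by omega), if_pos (by omega)]
      exact hie
    · have hij' : j < i := by omega
      refine ⟨n + j - i - 1, by omega, ?_⟩
      rw [Nat.mod_eq_of_lt (by omega : n + j - i - 1 + 1 < n),
        hmg (n + j - i - 1) (by omega), hmg (n + j - i - 1 + 1) (by omega),
        if_neg (by omega), if_neg (by omega),
        show n + j - (n + j - i - 1) = i + 1 by omega,
        show n + j - (n + j - i - 1 + 1) = i by omega, hie]
      exact Sym2.eq_swap

lemma main_list (n k : ℕ) (hcard : Fintype.card V = n) (hn3 : 3 ≤ n)
    (F : SimpleGraph V) (hF : IsLinearForest F) (hFk : F.edgeSet.ncard = k) :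
    ∀ (N : ℕ) (G : SimpleGraph V), Gᶜ.edgeSet.ncard ≤ N → F ≤ G →
      (∀ u v : V, u ≠ v → ¬ G.Adj u v →
        n + k ≤ (G.neighborSet u).ncard + (G.neighborSet v).ncard) →
      ∃ l, CycL G F l := by
  intro N
  induction N with
  | zero =>
    intro G hN hFG hdeg
    apply complete_case n k hcard hn3 G F hF
    intro u v huv
    by_contra hadj
    have h1 : Gᶜ.Adj u v := ⟨huv, hadj⟩
    have h2 : s(u,v) ∈ Gᶜ.edgeSet := h1
    have h3 : Gᶜ.edgeSet = ∅ := (Set.ncard_eq_zero (Set.toFinite _)).mp (by omega)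
    rw [h3] at h2
    exact absurd h2 (Set.notMem_empty _)
  | succ N ih =>
    intro G hN hFG hdeg
    by_cases hC : ∃ u v : V, u ≠ v ∧ ¬ G.Adj u v
    swap
    · apply complete_case n k hcard hn3 G F hF
      intro u v huv
      by_contra hadj
      exact hC ⟨u, v, huv, hadj⟩
    obtain ⟨x, y, hne, hnadj⟩ := hC
    set G' : SimpleGraph V := G ⊔ SimpleGraph.fromEdgeSet {s(x,y)} with hG'
    have hGle : G ≤ G' := le_sup_left
    have hG'adj : ∀ a b : V, G'.Adj a b ↔ G.Adj a b ∨ (s(a,b) = s(x,y) ∧ a ≠ b) := by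
      intro a b
      rw [hG', SimpleGraph.sup_adj, SimpleGraph.fromEdgeSet_adj]
      simp [Set.mem_singleton_iff]
    have hG'c : G'ᶜ.edgeSet = Gᶜ.edgeSet \ {s(x,y)} := by
      ext e
      induction e using Sym2.ind with
      | _ a b =>
        simp only [SimpleGraph.mem_edgeSet, SimpleGraph.compl_adj, Set.mem_diff,
          Set.mem_singleton_iff, hG'adj a b]
        constructor
        · rintro ⟨hab, h⟩
          push_neg at h
          exact ⟨⟨hab, h.1⟩, fun hc => hab (h.2 hc)⟩
        · rintro ⟨⟨hab, h⟩, h2⟩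
          refine ⟨hab, ?_⟩
          push_neg
          exact ⟨h, fun hc => absurd hc h2⟩
    have hxyc : s(x,y) ∈ Gᶜ.edgeSet := ⟨hne, hnadj⟩
    have hN' : G'ᶜ.edgeSet.ncard ≤ N := by
      rw [hG'c, Set.ncard_diff_singleton_of_mem hxyc]
      have : 0 < Gᶜ.edgeSet.ncard := (Set.ncard_pos (Set.toFinite _)).mpr ⟨_, hxyc⟩
      omega
    have hdeg' : ∀ u v : V, u ≠ v → ¬ G'.Adj u v →
        n + k ≤ (G'.neighborSet u).ncard + (G'.neighborSet v).ncard := by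
      intro u v huv hnadj'
      have h1 : ¬ G.Adj u v := fun h => hnadj' (hGle h)
      have h2 := hdeg u v huv h1
      have h3 : ∀ w : V, (G.neighborSet w).ncard ≤ (G'.neighborSet w).ncard :=
        fun w => Set.ncard_le_ncard (fun a ha => hGle ha) (Set.toFinite _)
      have := h3 u
      have := h3 v
      omega
    obtain ⟨l, hl⟩ := ih G' hN' (le_trans hFG hGle) hdeg'
    have hn' : l.length = n := by rw [hl.length_eq, hcard]
    have hnpos : 0 < n := by omega
    by_cases hxyl : ∃ i, i < l.length ∧ s(cg l i, cg l ((i+1) % l.length)) = s(x,y)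
    · -- the cycle uses the new edge; rotate and cross
      obtain ⟨i, hi, hie⟩ := hxyl
      have hl2 := hl.rotate (i+1)
      set p : List V := l.rotate (i+1) with hp
      have hplen : p.length = n := by rw [hp, List.length_rotate, hn']
      have e1 : cg p (n-1) = cg l i := by
        rw [hp, cg_rotate l (i+1) (n-1) (by omega)]
        congr 1
        rw [hn', show n - 1 + (i+1) = i + n by omega, Nat.add_mod_right]
        exact Nat.mod_eq_of_lt (by omega)
      have e2 : cg p 0 = cg l ((i+1) % l.length) := by
        rw [hp, cg_rotate l (i+1) 0 (by omega), Nat.zero_add]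
      have hclose : s(cg p (n-1), cg p 0) = s(x,y) := by
        rw [e1, e2]
        exact hie
      have hne2 : ∀ i2, i2 + 1 < n → s(cg p i2, cg p (i2+1)) ≠ s(cg p (n-1), cg p 0) := by
        intro i2 hi2 hceq
        rcases Sym2.eq_iff.mp hceq with ⟨f1, f2⟩ | ⟨f1, f2⟩
        · have := cg_inj hl2.nodup (i := i2) (j := n-1) (by omega) (by omega) f1
          omega
        · have g1 := cg_inj hl2.nodup (i := i2) (j := 0) (by omega) (by omega) f1
          have g2 := cg_inj hl2.nodup (i := i2+1) (j := n-1) (by omega) (by omega) f2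
          omega
      have hadjp : ∀ i2, i2 + 1 < n → G.Adj (cg p i2) (cg p (i2+1)) := by
        intro i2 hi2
        have h := hl2.adj i2 (by omega)
        rw [show (i2+1) % p.length = i2 + 1 from Nat.mod_eq_of_lt (by omega)] at h
        rw [hG'adj] at h
        rcases h with h | h
        · exact h
        · exact absurd (h.1.trans hclose.symm) (hne2 i2 hi2)
      have hFpp : ∀ e ∈ F.edgeSet, ∃ i2, i2 + 1 < n ∧ e = s(cg p i2, cg p (i2+1)) := by
        intro e he
        obtain ⟨i2, hi2, hie2⟩ := hl2.fedge e he
        by_cases hcase : i2 + 1 < n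
        · refine ⟨i2, hcase, ?_⟩
          rw [show (i2+1) % p.length = i2 + 1 from Nat.mod_eq_of_lt (by omega)] at hie2
          exact hie2
        · have hi2e : i2 = n - 1 := by omega
          rw [hi2e, show (n - 1 + 1) % p.length = 0 by
            rw [hplen, show n-1+1 = n by omega, Nat.mod_self]] at hie2
          rw [hie2, hclose] at he
          exact absurd (hFG he) hnadj
      rcases Sym2.eq_iff.mp hclose with ⟨h1, h2⟩ | ⟨h1, h2⟩
      · exact crossing G F n k hn3 hFG hFk p hl2.nodup hl2.mem hplen y x h2 h1
          (fun h => hnadj h.symm) (by have := hdeg x y hne hnadj; omega) hadjp hFpp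
      · exact crossing G F n k hn3 hFG hFk p hl2.nodup hl2.mem hplen x y h2 h1
          hnadj (hdeg x y hne hnadj) hadjp hFpp
    · -- the cycle avoids the new edge
      refine ⟨l, hl.nodup, hl.mem, hl.len3, ?_, hl.fedge⟩
      intro i hi
      have h1 := hl.adj i hi
      rw [hG'adj] at h1
      rcases h1 with h | h
      · exact h
      · exact absurd h.1 (fun hc => hxyl ⟨i, hi, hc⟩)

lemma cg_cons (a : V) (t : List V) (i : ℕ) : cg (a :: t) (i+1) = cg t i := rfl

lemma cg_lastD : ∀ (t : List V) (a : V), t.getLastD a = cg (a :: t) t.length := by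
  intro t
  induction t with
  | nil => intro a; rfl
  | cons b t' ih =>
    intro a
    rw [List.getLastD_cons, ih b]
    rfl

variable (G : SimpleGraph V)

def chainWalk : (a : V) → (l : List V) → List.Chain G.Adj a l → G.Walk a (l.getLastD a)
  | _, [], _ => Walk.nil
  | a, b :: l, h =>
    (Walk.cons (List.chain_cons.mp h).1 (chainWalk b l (List.chain_cons.mp h).2)).copy rfl
      (List.getLastD_cons (a := a) (b := b) (l := l)).symm

@[simp] lemma support_chainWalk : ∀ (a : V) (l : List V) (h : List.Chain G.Adj a l),
    (chainWalk G a l h).support = a :: l := by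
  intro a l
  induction l generalizing a with
  | nil => intro h; rfl
  | cons b t ih =>
    intro h
    rw [chainWalk]
    simp [ih b]
    exact ih b _

@[simp] lemma edges_chainWalk : ∀ (a : V) (l : List V) (h : List.Chain G.Adj a l),
    (chainWalk G a l h).edges = (List.zip (a::l) l).map (fun q => s(q.1, q.2)) := by
  intro a l
  induction l generalizing a with
  | nil => intro h; rfl
  | cons b t ih =>
    intro h
    rw [chainWalk]
    simp [ih b]
    exact ih b _

lemma cycL_to_ham (G F : SimpleGraph V) {l : List V} (h : CycL G F l) :
    ∃ (v : V) (c : G.Walk v v), c.IsHamiltonianCycle ∧ ∀ e ∈ F.edgeSet, e ∈ c.edges := by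
  classical
  obtain ⟨a, t, rfl⟩ : ∃ a t, l = a :: t := by
    cases l with
    | nil => exact absurd h.len3 (by simp)
    | cons a t => exact ⟨a, t, rfl⟩
  have hn3 : 3 ≤ (a :: t).length := h.len3
  have hlen : (a :: t).length = t.length + 1 := by simp
  have ha : cg (a :: t) 0 = a := rfl
  -- the chain
  have hchain : List.Chain G.Adj a t := by
    show List.IsChain G.Adj (a :: t)
    rw [List.isChain_iff_getElem]
    intro i hi
    have h1 := h.adj i (by omega)
    rw [Nat.mod_eq_of_lt hi, cg_eq _ _ (by omega), cg_eq _ _ hi] at h1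
    exact h1
  set p := chainWalk G a t hchain with hp
  have hbcg : t.getLastD a = cg (a :: t) (t.length) := cg_lastD t a
  have hlast : G.Adj (t.getLastD a) a := by
    have h1 := h.adj t.length (by simp)
    rw [show (t.length + 1) % (a::t).length = 0 by simp] at h1
    rw [hbcg]
    exact h1
  have hedge_mem : ∀ e, e ∈ p.edges ↔
      ∃ i, i + 1 < (a::t).length ∧ e = s(cg (a::t) i, cg (a::t) (i+1)) := by
    intro e
    rw [hp, edges_chainWalk]
    have hzlen : ((a::t).zip t).length = t.length := by simp
    constructor
    · intro he
      obtain ⟨q, hq, hqe⟩ := List.mem_map.mp he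
      obtain ⟨i, hi, hq2⟩ := List.mem_iff_getElem.mp hq
      rw [hzlen] at hi
      refine ⟨i, by simp; omega, ?_⟩
      rw [← hqe, ← hq2, List.getElem_zip]
      rw [cg_eq _ _ (by simp; omega), cg_eq _ _ (by simp; omega)]
      congr 1
    · rintro ⟨i, hi, rfl⟩
      simp only [List.length_cons] at hi
      apply List.mem_map.mpr
      refine ⟨((a::t).zip t)[i]'(by rw [hzlen]; omega), List.getElem_mem _, ?_⟩
      rw [List.getElem_zip]
      rw [cg_eq _ _ (by simp; omega), cg_eq _ _ (by simp; omega)]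
      congr 1
  have hpath : p.IsPath := by
    rw [Walk.isPath_def, hp, support_chainWalk]
    exact h.nodup
  have hnotmem : s(t.getLastD a, a) ∉ p.edges := by
    intro hmem
    obtain ⟨i, hi, heq⟩ := (hedge_mem _).mp hmem
    simp only [List.length_cons] at hi
    rcases Sym2.eq_iff.mp heq with ⟨h1, h2⟩ | ⟨h1, h2⟩
    · rw [hbcg] at h1
      have := cg_inj h.nodup (i := t.length) (j := i) (by simp) (by simp; omega) h1
      omega
    · rw [hbcg] at h1
      have e1 := cg_inj h.nodup (i := t.length) (j := i+1) (by simp) (by simp; omega) h1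
      have e2 := cg_inj h.nodup (i := 0) (j := i) (by simp) (by simp; omega) (ha.trans h2)
      omega
  set c : G.Walk (t.getLastD a) (t.getLastD a) := Walk.cons hlast p with hc
  have hcyc : c.IsCycle := by
    rw [hc, SimpleGraph.Walk.cons_isCycle_iff]
    exact ⟨hpath, hnotmem⟩
  have hham : c.IsHamiltonianCycle := by
    rw [Walk.isHamiltonianCycle_isCycle_and_isHamiltonian_tail]
    refine ⟨hcyc, ?_⟩
    rw [hc, Walk.tail_cons]
    intro v
    show List.count v (p.copy (Walk.getVert_zero p).symm rfl).support = 1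
    rw [Walk.support_copy]
    rw [hp, support_chainWalk]
    exact List.count_eq_one_of_mem h.nodup (h.mem v)
  refine ⟨t.getLastD a, c, hham, ?_⟩
  intro e he
  obtain ⟨i, hi, hie⟩ := h.fedge e he
  simp only [List.length_cons] at hi
  rw [hc, Walk.edges_cons]
  by_cases hcase : i + 1 < t.length + 1
  · apply List.mem_cons.mpr
    right
    apply (hedge_mem e).mpr
    refine ⟨i, by simp; omega, ?_⟩
    rw [hie]
    congr 2
    rw [Nat.mod_eq_of_lt (by simp; omega)]
  · have hieq : i = t.length := by omega
    apply List.mem_cons.mpr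
    left
    rw [hie, hieq, show (t.length + 1) % (a::t).length = 0 by simp, ha, hbcg]


end Aux

/-- Pósa: let `n ≥ 3`, `k < n`, and let `G` be an `n`-vertex graph with
`d(u) + d(v) ≥ n + k` for every pair of nonadjacent distinct vertices.  Then for
every linear forest `F ⊆ G` with `k` edges, `G` has a hamiltonian cycle
containing all edges of `F`. -/
theorem stmt_15 {V : Type*} [Fintype V] [DecidableEq V] (G : SimpleGraph V)
    [DecidableRel G.Adj] (n k : ℕ) (hn : Fintype.card V = n) (hn3 : 3 ≤ n)
    (hk : k < n)
    (hdeg : ∀ u v : V, u ≠ v → ¬ G.Adj u v → n + k ≤ G.degree u + G.degree v)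
    (F : SimpleGraph V) (hFG : F ≤ G) (hF : IsLinearForest F)
    (hFk : F.edgeSet.ncard = k) :
    ∃ (v : V) (c : G.Walk v v), c.IsHamiltonianCycle ∧ ∀ e ∈ F.edgeSet, e ∈ c.edges := by
  haveI : Nonempty V := by
    rw [← Fintype.card_pos_iff, hn]; omega
  have hdeg' : ∀ u v : V, u ≠ v → ¬ G.Adj u v →
      n + k ≤ (G.neighborSet u).ncard + (G.neighborSet v).ncard := by
    have hnc : ∀ u : V, (G.neighborSet u).ncard = G.degree u := by
      intro u
      rw [Set.ncard_eq_toFinset_card']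
      rfl
    intro u v h1 h2
    rw [hnc u, hnc v]
    exact hdeg u v h1 h2
  obtain ⟨l, hl⟩ := main_list n k hn hn3 F hF hFk (Gᶜ.edgeSet.ncard) G le_rfl hFG hdeg'
  exact cycL_to_ham G F hl
end

section
/- Let t ≥ 2 and let H be a subgraph of the complete bipartite graph K_{t,t+1} with parts A (|A| = t) and B (|B| = t+1) obtained by deleting at most t - 2 edges. Then any two distinct vertices b₁, b₂ ∈ B are joined in H by a path of length 2t, any a ∈ A and b ∈ B are joined by a path of length 2t - 1, and any two distinct a₁, a₂ ∈ A are joined by a path of length 2t - 2. -/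
open SimpleGraph Finset

set_option linter.unusedSectionVars false
set_option linter.unusedVariables false
set_option maxHeartbeats 1600000

variable {V : Type*} [DecidableEq V]

open Classical in
noncomputable def Miss (H : SimpleGraph V) (A B : Finset V) : Finset (V × V) :=
  (A ×ˢ B).filter (fun p => ¬ H.Adj p.1 p.2)

variable {H : SimpleGraph V} {A B : Finset V}

lemma mem_Miss {a b : V} (ha : a ∈ A) (hb : b ∈ B) (h : ¬ H.Adj a b) : (a, b) ∈ Miss H A B := by
  simp [Miss, ha, hb, h]

lemma Miss_adj {a b : V} (ha : a ∈ A) (hb : b ∈ B) (h : (a, b) ∉ Miss H A B) : H.Adj a b := by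
  by_contra hc; exact h (mem_Miss ha hb hc)

lemma Miss_fst {q : V × V} (h : q ∈ Miss H A B) : q.1 ∈ A := by
  simp [Miss] at h; exact h.1.1

lemma Miss_snd {q : V × V} (h : q ∈ Miss H A B) : q.2 ∈ B := by
  simp [Miss] at h; exact h.1.2

lemma Miss_not_adj {q : V × V} (h : q ∈ Miss H A B) : ¬ H.Adj q.1 q.2 := by
  simp [Miss] at h; exact h.2

lemma Miss_erase_subset (a b : V) : Miss H (A.erase a) (B.erase b) ⊆ Miss H A B := by
  intro q hq
  simp only [Miss, mem_filter, mem_product] at hq ⊢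
  exact ⟨⟨Finset.mem_of_mem_erase hq.1.1, Finset.mem_of_mem_erase hq.1.2⟩, hq.2⟩

lemma Miss_erase_card_lt {a b : V} {q : V × V} (hq : q ∈ Miss H A B)
    (hc : a = q.1 ∨ b = q.2) : (Miss H (A.erase a) (B.erase b)).card + 1 ≤ (Miss H A B).card := by
  have hsub : Miss H (A.erase a) (B.erase b) ⊆ (Miss H A B).erase q := by
    intro r hr
    rw [Finset.mem_erase]
    refine ⟨?_, Miss_erase_subset a b hr⟩
    simp only [Miss, mem_filter, mem_product, Finset.mem_erase] at hr
    rcases hc with rfl | rfl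
    · exact fun h => hr.1.1.1 (congrArg Prod.fst h)
    · exact fun h => hr.1.2.1 (congrArg Prod.snd h)
  calc (Miss H (A.erase a) (B.erase b)).card + 1 ≤ ((Miss H A B).erase q).card + 1 :=
        by exact Nat.add_le_add_right (Finset.card_le_card hsub) 1
    _ = (Miss H A B).card := by rw [Finset.card_erase_of_mem hq]; exact Nat.succ_pred_eq_of_pos (Finset.card_pos.mpr ⟨q, hq⟩)

/-- pick a "full" vertex of `A` (adjacent to all of `B`) avoiding `S`. -/
lemma exists_full_left (S : Finset V) (h : S.card + (Miss H A B).card < A.card) :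
    ∃ a ∈ A, a ∉ S ∧ ∀ b ∈ B, H.Adj a b := by
  have hsub : (A \ (S ∪ (Miss H A B).image Prod.fst)).Nonempty := by
    rw [← Finset.card_pos]
    have h1 := Finset.le_card_sdiff (S ∪ (Miss H A B).image Prod.fst) A
    have h2 : (S ∪ (Miss H A B).image Prod.fst).card ≤ S.card + (Miss H A B).card :=
      le_trans (Finset.card_union_le _ _) (by
        exact Nat.add_le_add_left (Finset.card_image_le) _)
    omega
  obtain ⟨a, ha⟩ := hsub
  rw [Finset.mem_sdiff, Finset.mem_union] at ha
  push_neg at ha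
  refine ⟨a, ha.1, ha.2.1, fun b hb => ?_⟩
  by_contra hc
  exact ha.2.2 (Finset.mem_image.mpr ⟨(a, b), mem_Miss ha.1 hb hc, rfl⟩)

lemma exists_full_right (S : Finset V) (h : S.card + (Miss H A B).card < B.card) :
    ∃ b ∈ B, b ∉ S ∧ ∀ a ∈ A, H.Adj a b := by
  have hsub : (B \ (S ∪ (Miss H A B).image Prod.snd)).Nonempty := by
    rw [← Finset.card_pos]
    have h1 := Finset.le_card_sdiff (S ∪ (Miss H A B).image Prod.snd) B
    have h2 : (S ∪ (Miss H A B).image Prod.snd).card ≤ S.card + (Miss H A B).card :=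
      le_trans (Finset.card_union_le _ _) (by
        exact Nat.add_le_add_left (Finset.card_image_le) _)
    omega
  obtain ⟨b, hb⟩ := hsub
  rw [Finset.mem_sdiff, Finset.mem_union] at hb
  push_neg at hb
  refine ⟨b, hb.1, hb.2.1, fun a ha => ?_⟩
  by_contra hc
  exact hb.2.2 (Finset.mem_image.mpr ⟨(a, b), mem_Miss ha hb.1 hc, rfl⟩)

section Walks
variable {H : SimpleGraph V} {A B : Finset V}

lemma splice {u v α β : V} {p : H.Walk u v} (hp : p.IsPath) {d : H.Dart} (hd : d ∈ p.darts)
    (h1 : H.Adj d.toProd.1 α) (h2 : H.Adj α β) (h3 : H.Adj β d.toProd.2)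
    (hα : α ∉ p.support) (hβ : β ∉ p.support) :
    ∃ q : H.Walk u v, q.IsPath ∧
      q.support.toFinset = insert α (insert β p.support.toFinset) ∧
      q.length = p.length + 2 := by
  induction p with
  | nil => simp at hd
  | @cons u w v h p ih =>
    rw [SimpleGraph.Walk.darts_cons, List.mem_cons] at hd
    rw [SimpleGraph.Walk.support_cons, List.mem_cons] at hα hβ
    push_neg at hα hβ
    rcases hd with hd | hd
    · subst hd
      dsimp at h1 h3
      refine ⟨Walk.cons h1 (Walk.cons h2 (Walk.cons h3 p)), ?_, ?_, by simp⟩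
      · rw [Walk.cons_isPath_iff] at hp ⊢
        rw [Walk.cons_isPath_iff, Walk.cons_isPath_iff]
        simp only [Walk.support_cons, List.mem_cons]
        refine ⟨⟨⟨hp.1, hβ.2⟩, ?_⟩, ?_⟩
        · push_neg; exact ⟨h2.ne, hα.2⟩
        · push_neg; exact ⟨Ne.symm hα.1, Ne.symm hβ.1, hp.2⟩
      · simp only [Walk.support_cons, List.toFinset_cons]
        ext x; simp; tauto
    · have hp' := hp.of_cons
      obtain ⟨q, hq1, hq2, hq3⟩ := ih hp' hd hα.2 hβ.2
      have hu : u ∉ q.support := by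
        rw [← List.mem_toFinset, hq2]
        simp only [Finset.mem_insert, List.mem_toFinset]
        push_neg
        exact ⟨Ne.symm hα.1, Ne.symm hβ.1, (Walk.cons_isPath_iff h p).mp hp |>.2⟩
      refine ⟨Walk.cons h q, (Walk.cons_isPath_iff h q).mpr ⟨hq1, hu⟩, ?_, by simpa using by omega⟩
      simp only [Walk.support_cons, List.toFinset_cons, hq2]
      ext x; simp; tauto

lemma exists_dart_at {u v x : V} {p : H.Walk u v} (hx : x ∈ p.support) (hl : 0 < p.length) :
    ∃ d ∈ p.darts, d.toProd.1 = x ∨ d.toProd.2 = x := by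
  induction p with
  | nil => simp at hl
  | @cons u w v h p ih =>
    rw [Walk.support_cons, List.mem_cons] at hx
    rcases hx with rfl | hx
    · exact ⟨⟨(x, w), h⟩, by simp [Walk.darts_cons], Or.inl rfl⟩
    · rcases Nat.eq_zero_or_pos p.length with h0 | h0
      · have hs : p.support = [w] := by
          have h1 : p.support.length = 1 := by rw [Walk.length_support, h0]
          have h2 := p.support_eq_cons
          cases hsup : p.support with
          | nil => simp [hsup] at h1
          | cons a l =>
            rw [hsup] at h1 h2
            simp at h1
            simp [h1] at h2 ⊢
            exact h2
        rw [hs] at hx; simp at hx; subst hx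
        exact ⟨⟨(u, x), h⟩, by simp [Walk.darts_cons], Or.inr rfl⟩
      · obtain ⟨d, hd, hd2⟩ := ih hx h0
        exact ⟨d, by simp [Walk.darts_cons, hd], hd2⟩

lemma support_toFinset_card {u v : V} {p : H.Walk u v} (hp : p.IsPath) :
    p.support.toFinset.card = p.length + 1 := by
  rw [List.toFinset_card_of_nodup hp.support_nodup, Walk.length_support]

lemma insert_pair_at_left (hAA : ∀ x ∈ A, ∀ y ∈ A, ¬H.Adj x y)
    {u v x nA nB : V} {p : H.Walk u v}
    (hp : p.IsPath) (hlen : 0 < p.length) (hx : x ∈ p.support) (hxA : x ∈ A)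
    (hsub : p.support.toFinset ⊆ A ∪ B)
    (hnAfull : ∀ y ∈ B, H.Adj nA y) (hAdj : H.Adj nA nB) (hnBx : H.Adj nB x)
    (hnA : nA ∉ p.support) (hnB : nB ∉ p.support) :
    ∃ q : H.Walk u v, q.IsPath ∧
      q.support.toFinset = insert nA (insert nB p.support.toFinset) ∧
      q.length = p.length + 2 := by
  obtain ⟨d, hd, hor⟩ := exists_dart_at hx hlen
  have hfst : d.toProd.1 ∈ p.support := p.dart_fst_mem_support_of_mem_darts hd
  have hsnd : d.toProd.2 ∈ p.support := p.dart_snd_mem_support_of_mem_darts hd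
  rcases hor with h | h
  · -- d = (x, c) : insert x nB nA c
    set c := d.toProd.2 with hc
    have hcB : c ∈ B := by
      have hmem : c ∈ A ∪ B := hsub (List.mem_toFinset.mpr hsnd)
      rcases Finset.mem_union.mp hmem with hA' | hB'
      · exact absurd (h ▸ d.adj) (hAA x hxA c hA')
      · exact hB'
    obtain ⟨q, hq1, hq2, hq3⟩ := splice hp hd (h ▸ hnBx.symm : H.Adj d.toProd.1 nB)
      hAdj.symm (hnAfull c hcB) hnB hnA
    exact ⟨q, hq1, by rw [hq2]; exact Finset.insert_comm _ _ _, hq3⟩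
  · -- d = (c, x) : insert c nA nB x
    set c := d.toProd.1 with hc
    have hcB : c ∈ B := by
      have hmem : c ∈ A ∪ B := hsub (List.mem_toFinset.mpr hfst)
      rcases Finset.mem_union.mp hmem with hA' | hB'
      · exact absurd (h ▸ d.adj) fun hh => (hAA x hxA c hA') hh.symm
      · exact hB'
    obtain ⟨q, hq1, hq2, hq3⟩ := splice hp hd ((hnAfull c hcB).symm)
      hAdj (h ▸ hnBx : H.Adj nB d.toProd.2) hnA hnB
    exact ⟨q, hq1, hq2, hq3⟩

lemma insert_pair_at_right (hBB : ∀ x ∈ B, ∀ y ∈ B, ¬H.Adj x y)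
    {u v x nA nB : V} {p : H.Walk u v}
    (hp : p.IsPath) (hlen : 0 < p.length) (hx : x ∈ p.support) (hxB : x ∈ B)
    (hsub : p.support.toFinset ⊆ A ∪ B)
    (hnBfull : ∀ y ∈ A, H.Adj y nB) (hAdj : H.Adj nA nB) (hnAx : H.Adj nA x)
    (hnA : nA ∉ p.support) (hnB : nB ∉ p.support) :
    ∃ q : H.Walk u v, q.IsPath ∧
      q.support.toFinset = insert nA (insert nB p.support.toFinset) ∧
      q.length = p.length + 2 := by
  obtain ⟨d, hd, hor⟩ := exists_dart_at hx hlen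
  have hfst : d.toProd.1 ∈ p.support := p.dart_fst_mem_support_of_mem_darts hd
  have hsnd : d.toProd.2 ∈ p.support := p.dart_snd_mem_support_of_mem_darts hd
  rcases hor with h | h
  · -- d = (x, y) with y ∈ A : insert x nA nB y
    set y := d.toProd.2 with hy
    have hyA : y ∈ A := by
      have hmem : y ∈ A ∪ B := hsub (List.mem_toFinset.mpr hsnd)
      rcases Finset.mem_union.mp hmem with hA' | hB'
      · exact hA'
      · exact absurd (h ▸ d.adj) (hBB x hxB y hB')
    obtain ⟨q, hq1, hq2, hq3⟩ := splice hp hd (h ▸ hnAx.symm : H.Adj d.toProd.1 nA)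
      hAdj (hnBfull y hyA).symm hnA hnB
    exact ⟨q, hq1, hq2, hq3⟩
  · -- d = (y, x) with y ∈ A : insert y nB nA x
    set y := d.toProd.1 with hy
    have hyA : y ∈ A := by
      have hmem : y ∈ A ∪ B := hsub (List.mem_toFinset.mpr hfst)
      rcases Finset.mem_union.mp hmem with hA' | hB'
      · exact hA'
      · exact absurd (h ▸ d.adj) fun hh => (hBB x hxB y hB') hh.symm
    obtain ⟨q, hq1, hq2, hq3⟩ := splice hp hd (hnBfull y hyA)
      hAdj.symm (h ▸ hnAx : H.Adj nA d.toProd.2) hnB hnA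
    exact ⟨q, hq1, by rw [hq2]; exact Finset.insert_comm _ _ _, hq3⟩

lemma exists_mem_not_mem (S : Finset V) (h : S.card < A.card) : ∃ a ∈ A, a ∉ S := by
  have h1 := Finset.le_card_sdiff S A
  have h2 : (A \ S).Nonempty := by rw [← Finset.card_pos]; omega
  obtain ⟨a, ha⟩ := h2
  rw [Finset.mem_sdiff] at ha
  exact ⟨a, ha.1, ha.2⟩

end Walks

def Good2 (H : SimpleGraph V) (t : ℕ) : Prop :=
  ∀ A B : Finset V, Disjoint A B → A.card = t → B.card = t + 1 →
    (∀ x ∈ A, ∀ y ∈ A, ¬H.Adj x y) → (∀ x ∈ B, ∀ y ∈ B, ¬H.Adj x y) →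
    (Miss H A B).card ≤ t - 2 →
    ∀ a ∈ A, ∀ b ∈ B, ∀ b₀ ∈ B, b₀ ≠ b →
      ∃ p : H.Walk a b, p.IsPath ∧ p.support.toFinset = (A ∪ B).erase b₀ ∧
        p.length = 2 * t - 1

def Good3 (H : SimpleGraph V) (t : ℕ) : Prop :=
  ∀ A B : Finset V, Disjoint A B → A.card = t → B.card = t + 1 →
    (∀ x ∈ A, ∀ y ∈ A, ¬H.Adj x y) → (∀ x ∈ B, ∀ y ∈ B, ¬H.Adj x y) →
    (Miss H A B).card ≤ t - 2 →
    ∀ a₁ ∈ A, ∀ a₂ ∈ A, a₁ ≠ a₂ → ∀ b₀ ∈ B,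
      ∃ p : H.Walk a₁ a₂, p.IsPath ∧ A ⊆ p.support.toFinset ∧
        p.support.toFinset ⊆ (A ∪ B).erase b₀ ∧ p.length = 2 * t - 2

lemma good2_base : Good2 H 2 := by
  intro A B hd hA hB hAA hBB hm a ha b hb b₀ hb₀ hne
  have hadj : ∀ x ∈ A, ∀ y ∈ B, H.Adj x y := by
    intro x hx y hy
    by_contra hc
    have := Finset.card_pos.mpr ⟨(x, y), mem_Miss hx hy hc⟩
    omega
  have hABne : ∀ x ∈ A, ∀ y ∈ B, x ≠ y := by
    intro x hx y hy h
    exact (Finset.disjoint_left.mp hd hx) (h ▸ hy)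
  -- get the other element of A
  obtain ⟨x, y, hxy, hAe⟩ := Finset.card_eq_two.mp hA
  have haxy : a = x ∨ a = y := by
    have := ha; rw [hAe] at this; simpa using this
  obtain ⟨a', ha', hane, hAeq⟩ : ∃ a', a' ∈ A ∧ a ≠ a' ∧ A = {a, a'} := by
    rcases haxy with rfl | rfl
    · exact ⟨y, by simp [hAe], hxy, hAe⟩
    · exact ⟨x, by simp [hAe], hxy.symm, by rw [hAe]; ext z; simp; tauto⟩
  -- get the third element of B
  have hcB : (B \ {b, b₀}).Nonempty := by
    rw [← Finset.card_pos]
    have h1 := Finset.le_card_sdiff ({b, b₀} : Finset V) B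
    have h2 : ({b, b₀} : Finset V).card ≤ 2 := Finset.card_le_two
    omega
  obtain ⟨c, hc⟩ := hcB
  rw [Finset.mem_sdiff] at hc
  have hcb : c ≠ b := by intro h; apply hc.2; simp [h]
  have hcb₀ : c ≠ b₀ := by intro h; apply hc.2; simp [h]
  have hBeq : B = {b, b₀, c} := by
    refine (Finset.eq_of_subset_of_card_le ?_ ?_).symm
    · intro z hz; simp at hz; rcases hz with rfl | rfl | rfl; exacts [hb, hb₀, hc.1]
    · rw [hB]
      have h3 : ({b, b₀, c} : Finset V).card = 3 := by
        rw [Finset.card_insert_of_notMem (by simp; exact ⟨Ne.symm hne, fun h => hcb h.symm⟩),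
          Finset.card_insert_of_notMem (by simp; exact fun h => hcb₀ h.symm),
          Finset.card_singleton]
      omega
  -- build the walk  a - c - a' - b
  let p : H.Walk a b :=
    Walk.cons (hadj a ha c hc.1)
      (Walk.cons (hadj a' ha' c hc.1).symm
        (Walk.cons (hadj a' ha' b hb) Walk.nil))
  refine ⟨p, ?_, ?_, by simp [p]⟩
  · rw [Walk.isPath_def]
    have : p.support = [a, c, a', b] := by simp [p]
    rw [this]
    simp only [List.nodup_cons, List.mem_cons, List.not_mem_nil, or_false, List.nodup_nil,
      and_true, List.mem_singleton, List.not_mem_nil]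
    refine ⟨?_, ?_, ?_⟩
    · push_neg
      exact ⟨hABne a ha c hc.1, hane, hABne a ha b hb⟩
    · push_neg
      exact ⟨fun h => hABne a' ha' c hc.1 h.symm, hcb⟩
    · simpa using hABne a' ha' b hb
  · have : p.support = [a, c, a', b] := by simp [p]
    rw [this]
    rw [hAeq, hBeq]
    ext z
    simp only [List.toFinset_cons, List.toFinset_nil, LawfulSingleton.insert_empty_eq, Finset.mem_insert,
      Finset.mem_erase, Finset.mem_union, Finset.mem_singleton]
    constructor
    · rintro (rfl | rfl | rfl | rfl)
      · exact ⟨fun h => hABne z ha b₀ hb₀ h, by tauto⟩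
      · exact ⟨hcb₀, by tauto⟩
      · exact ⟨fun h => hABne z ha' b₀ hb₀ h, by tauto⟩
      · exact ⟨Ne.symm hne, by tauto⟩
    · rintro ⟨h1, (rfl | rfl) | (rfl | rfl | rfl)⟩ <;> tauto

lemma good3_base : Good3 H 2 := by
  intro A B hd hA hB hAA hBB hm a₁ ha₁ a₂ ha₂ hne b₀ hb₀
  have hadj : ∀ x ∈ A, ∀ y ∈ B, H.Adj x y := by
    intro x hx y hy
    by_contra hc
    have := Finset.card_pos.mpr ⟨(x, y), mem_Miss hx hy hc⟩
    omega
  have hABne : ∀ x ∈ A, ∀ y ∈ B, x ≠ y := by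
    intro x hx y hy h
    exact (Finset.disjoint_left.mp hd hx) (h ▸ hy)
  have hcB : (B \ {b₀}).Nonempty := by
    rw [← Finset.card_pos]
    have h1 := Finset.le_card_sdiff ({b₀} : Finset V) B
    rw [Finset.card_singleton] at h1
    omega
  obtain ⟨c, hc⟩ := hcB
  rw [Finset.mem_sdiff, Finset.mem_singleton] at hc
  have hAeq : A = {a₁, a₂} := by
    refine (Finset.eq_of_subset_of_card_le ?_ ?_).symm
    · intro z hz; simp at hz; rcases hz with rfl | rfl; exacts [ha₁, ha₂]
    · rw [hA]
      have h3 : ({a₁, a₂} : Finset V).card = 2 := by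
        rw [Finset.card_insert_of_notMem (by simp [hne]), Finset.card_singleton]
      omega
  let p : H.Walk a₁ a₂ :=
    Walk.cons (hadj a₁ ha₁ c hc.1) (Walk.cons (hadj a₂ ha₂ c hc.1).symm Walk.nil)
  have hsup : p.support = [a₁, c, a₂] := by simp [p]
  refine ⟨p, ?_, ?_, ?_, by simp [p]⟩
  · rw [Walk.isPath_def, hsup]
    simp only [List.nodup_cons, List.mem_cons, List.not_mem_nil, or_false, List.nodup_nil,
      and_true, List.mem_singleton]
    refine ⟨?_, ?_⟩
    · push_neg; exact ⟨hABne a₁ ha₁ c hc.1, hne⟩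
    · exact ⟨fun h => hABne a₂ ha₂ c hc.1 h.symm, not_false⟩
  · intro z hz
    rw [hAeq] at hz
    rw [hsup]
    simp at hz ⊢
    tauto
  · intro z hz
    rw [hsup] at hz
    simp at hz
    rw [Finset.mem_erase, Finset.mem_union]
    rcases hz with rfl | rfl | rfl
    · exact ⟨hABne z ha₁ b₀ hb₀, Or.inl ha₁⟩
    · exact ⟨hc.2, Or.inr hc.1⟩
    · exact ⟨hABne z ha₂ b₀ hb₀, Or.inl ha₂⟩


section Step
variable {H : SimpleGraph V} {A B : Finset V}

lemma set_insert_eq1 {a₁ b₁ b₀ : V} (ha : a₁ ∈ A) (hb : b₁ ∈ B) (hb₀ : b₀ ∈ B)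
    (h1 : a₁ ≠ b₀) (h2 : b₁ ≠ b₀) :
    insert a₁ (insert b₁ (((A.erase a₁) ∪ (B.erase b₁)).erase b₀)) = (A ∪ B).erase b₀ := by
  ext w
  simp only [Finset.mem_insert, Finset.mem_erase, Finset.mem_union]
  constructor
  · rintro (rfl | rfl | ⟨hw0, (⟨hwa, hwA⟩ | ⟨hwb, hwB⟩)⟩)
    · exact ⟨h1, Or.inl ha⟩
    · exact ⟨h2, Or.inr hb⟩
    · exact ⟨hw0, Or.inl hwA⟩
    · exact ⟨hw0, Or.inr hwB⟩
  · rintro ⟨hw0, hw | hw⟩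
    · by_cases hwa : w = a₁
      · exact Or.inl hwa
      · exact Or.inr (Or.inr ⟨hw0, Or.inl ⟨hwa, hw⟩⟩)
    · by_cases hwb : w = b₁
      · exact Or.inr (Or.inl hwb)
      · exact Or.inr (Or.inr ⟨hw0, Or.inr ⟨hwb, hw⟩⟩)

lemma good3_step {t : ℕ} (ht : 2 ≤ t) (ih : Good3 H t) : Good3 H (t + 1) := by
  intro A B hd hA hB hAA hBB hm a₁ ha₁ a₂ ha₂ hne b₀ hb₀
  have hm' : (Miss H A B).card ≤ t - 1 := by omega
  have hABne : ∀ x ∈ A, ∀ y ∈ B, x ≠ y := by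
    intro x hx y hy h
    exact (Finset.disjoint_left.mp hd hx) (h ▸ hy)
  -- generic IH caller
  have callIH : ∀ aa ∈ A, ∀ bb ∈ B, (Miss H (A.erase aa) (B.erase bb)).card ≤ t - 2 →
      a₁ ≠ aa → a₂ ≠ aa → ∀ b₀' ∈ B.erase bb,
      ∃ p : H.Walk a₁ a₂, p.IsPath ∧ (A.erase aa) ⊆ p.support.toFinset ∧
        p.support.toFinset ⊆ ((A.erase aa) ∪ (B.erase bb)).erase b₀' ∧ p.length = 2 * t - 2 := by
    intro aa haa bb hbb hm2 h1 h2 b₀' hb₀'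
    refine ih (A.erase aa) (B.erase bb)
      (Finset.disjoint_of_subset_left (Finset.erase_subset _ _)
        (Finset.disjoint_of_subset_right (Finset.erase_subset _ _) hd))
      (by rw [Finset.card_erase_of_mem haa, hA]; omega) (by rw [Finset.card_erase_of_mem hbb, hB]; omega)
      (fun x hx y hy => hAA x (Finset.mem_of_mem_erase hx) y (Finset.mem_of_mem_erase hy))
      (fun x hx y hy => hBB x (Finset.mem_of_mem_erase hx) y (Finset.mem_of_mem_erase hy))
      hm2 a₁ (Finset.mem_erase.mpr ⟨h1, ha₁⟩) a₂ (Finset.mem_erase.mpr ⟨h2, ha₂⟩) hne b₀' hb₀'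
  by_cases hc1 : (Miss H A B).card ≤ t - 2
  -- ============ Branch I : few missing edges, both removed vertices full =========
  · obtain ⟨aa, haaA, haan, haafull⟩ := exists_full_left (H := H) (A := A) (B := B) ({a₁, a₂} : Finset V)
      (by have := Finset.card_le_two (a := a₁) (b := a₂); omega)
    obtain ⟨bb, hbbB, hbbn, hbbfull⟩ := exists_full_right (H := H) (A := A) (B := B) ({b₀} : Finset V)
      (by rw [Finset.card_singleton]; omega)
    have hbbb₀ : bb ≠ b₀ := by intro h; exact hbbn (by simp [h])
    have haa1 : a₁ ≠ aa := by intro h; exact haan (by simp [h.symm])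
    have haa2 : a₂ ≠ aa := by intro h; exact haan (by simp [h.symm])
    have hm2 : (Miss H (A.erase aa) (B.erase bb)).card ≤ t - 2 :=
      le_trans (Finset.card_le_card (Miss_erase_subset _ _)) hc1
    obtain ⟨p, hp, hpA, hpsub, hplen⟩ := callIH aa haaA bb hbbB hm2 haa1 haa2 b₀
      (Finset.mem_erase.mpr ⟨fun h => hbbb₀ h.symm, hb₀⟩)
    -- insert (aa, bb) anchored at a₁
    have haanS : aa ∉ p.support := by
      intro h
      have := hpsub (List.mem_toFinset.mpr h)
      rw [Finset.mem_erase, Finset.mem_union] at this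
      rcases this.2 with h' | h'
      · exact (Finset.notMem_erase aa A) h'
      · exact (Finset.disjoint_left.mp hd haaA) (Finset.mem_of_mem_erase h')
    have hbbnS : bb ∉ p.support := by
      intro h
      have := hpsub (List.mem_toFinset.mpr h)
      rw [Finset.mem_erase, Finset.mem_union] at this
      rcases this.2 with h' | h'
      · exact (Finset.disjoint_right.mp hd hbbB) (Finset.mem_of_mem_erase h')
      · exact (Finset.notMem_erase bb B) h'
    have hsub' : p.support.toFinset ⊆ A ∪ B := by
      intro w hw
      have := hpsub hw
      rw [Finset.mem_erase, Finset.mem_union] at this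
      rcases this.2 with h' | h'
      · exact Finset.mem_union_left _ (Finset.mem_of_mem_erase h')
      · exact Finset.mem_union_right _ (Finset.mem_of_mem_erase h')
    obtain ⟨q, hq, hqsup, hqlen⟩ := insert_pair_at_left (nA := aa) (nB := bb) hAA hp
      (by omega) (List.mem_toFinset.mp (hpA (Finset.mem_erase.mpr ⟨haa1, ha₁⟩))) ha₁ hsub'
      haafull (haafull bb hbbB) (hbbfull a₁ ha₁).symm haanS hbbnS
    refine ⟨q, hq, ?_, ?_, by omega⟩
    · intro w hw
      rw [hqsup, Finset.mem_insert, Finset.mem_insert]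
      by_cases hwa : w = aa
      · exact Or.inl hwa
      · exact Or.inr (Or.inr (hpA (Finset.mem_erase.mpr ⟨hwa, hw⟩)))
    · rw [hqsup]
      intro w hw
      rw [Finset.mem_insert, Finset.mem_insert] at hw
      rw [Finset.mem_erase, Finset.mem_union]
      rcases hw with rfl | rfl | hw
      · exact ⟨hABne w haaA b₀ hb₀, Or.inl haaA⟩
      · exact ⟨hbbb₀, Or.inr hbbB⟩
      · have := hpsub hw
        rw [Finset.mem_erase, Finset.mem_union] at this
        rcases this.2 with h' | h'
        · exact ⟨this.1, Or.inl (Finset.mem_of_mem_erase h')⟩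
        · exact ⟨this.1, Or.inr (Finset.mem_of_mem_erase h')⟩
  -- ============ Branch II : exactly t-1 missing edges ============
  · have hmeq : (Miss H A B).card = t - 1 := by omega
    have hnotinS : ∀ (w : V) {u v : V} (p : H.Walk u v) (T : Finset V),
        p.support.toFinset ⊆ T → w ∉ T → w ∉ p.support :=
      fun w u v p T hsub hw h => hw (hsub (List.mem_toFinset.mpr h))
    have hAnotin : ∀ aa ∈ A, ∀ (bb c : V), aa ∉ ((A.erase aa) ∪ (B.erase bb)).erase c := by
      intro aa haa bb c h
      rcases Finset.mem_union.mp (Finset.mem_of_mem_erase h) with h' | h'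
      · exact (Finset.notMem_erase aa A) h'
      · exact (Finset.disjoint_left.mp hd haa) (Finset.mem_of_mem_erase h')
    have hBnotin : ∀ bb ∈ B, ∀ (aa c : V), bb ∉ ((A.erase aa) ∪ (B.erase bb)).erase c := by
      intro bb hbb aa c h
      rcases Finset.mem_union.mp (Finset.mem_of_mem_erase h) with h' | h'
      · exact (Finset.disjoint_right.mp hd hbb) (Finset.mem_of_mem_erase h')
      · exact (Finset.notMem_erase bb B) h'
    have hsubAB : ∀ (aa bb c : V), ((A.erase aa) ∪ (B.erase bb)).erase c ⊆ A ∪ B := by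
      intro aa bb c w hw
      rcases Finset.mem_union.mp (Finset.mem_of_mem_erase hw) with h' | h'
      · exact Finset.mem_union_left _ (Finset.mem_of_mem_erase h')
      · exact Finset.mem_union_right _ (Finset.mem_of_mem_erase h')
    have buildConc : ∀ aa ∈ A, ∀ bi ∈ B, bi ≠ b₀ → ∀ (q : H.Walk a₁ a₂) (S : Finset V),
        q.IsPath → q.support.toFinset = insert aa (insert bi S) →
        (A.erase aa) ⊆ S → S ⊆ (A ∪ B).erase b₀ → q.length = 2 * t →
        ∃ p : H.Walk a₁ a₂, p.IsPath ∧ A ⊆ p.support.toFinset ∧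
          p.support.toFinset ⊆ (A ∪ B).erase b₀ ∧ p.length = 2 * (t + 1) - 2 := by
      intro aa haa bi hbi hbin q S hq hsup hAS hSsub hlen
      refine ⟨q, hq, ?_, ?_, by omega⟩
      · intro w hw
        rw [hsup, Finset.mem_insert, Finset.mem_insert]
        by_cases hwa : w = aa
        · exact Or.inl hwa
        · exact Or.inr (Or.inr (hAS (Finset.mem_erase.mpr ⟨hwa, hw⟩)))
      · rw [hsup]
        intro w hw
        rw [Finset.mem_insert, Finset.mem_insert] at hw
        rcases hw with rfl | rfl | hw
        · exact Finset.mem_erase.mpr ⟨hABne w haa b₀ hb₀, Finset.mem_union_left _ haa⟩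
        · exact Finset.mem_erase.mpr ⟨hbin, Finset.mem_union_right _ hbi⟩
        · exact hSsub hw
    by_cases hFA : ∃ a' ∈ A, a' ∉ ({a₁, a₂} : Finset V) ∧ ∀ y ∈ B, H.Adj a' y
    · obtain ⟨aa, haaA, haan, haafull⟩ := hFA
      have ha1 : a₁ ≠ aa := fun h => haan (by simp [h.symm])
      have ha2 : a₂ ≠ aa := fun h => haan (by simp [h.symm])
      by_cases hbex : ∃ q ∈ Miss H A B, q.2 ≠ b₀
      · -- (i) : remove a nonfull B-vertex bb ≠ b₀
        obtain ⟨qm, hqm, hqm2⟩ := hbex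
        have hbbB : qm.2 ∈ B := Miss_snd hqm
        have hm2 : (Miss H (A.erase aa) (B.erase qm.2)).card ≤ t - 2 := by
          have := Miss_erase_card_lt (a := aa) (b := qm.2) hqm (Or.inr rfl)
          omega
        obtain ⟨p, hp, hpA, hpsub, hplen⟩ := callIH aa haaA qm.2 hbbB hm2 ha1 ha2 b₀
          (Finset.mem_erase.mpr ⟨fun h => hqm2 h.symm, hb₀⟩)
        obtain ⟨x, hxA, hxn, hxfull⟩ := exists_full_left (H := H) (A := A) (B := B)
          ({aa} : Finset V) (by rw [Finset.card_singleton]; omega)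
        have hxaa : x ≠ aa := by simpa using hxn
        obtain ⟨q, hq, hqsup, hqlen⟩ := insert_pair_at_left (nA := aa) (nB := qm.2) hAA hp
          (by omega) (List.mem_toFinset.mp (hpA (Finset.mem_erase.mpr ⟨hxaa, hxA⟩))) hxA
          (le_trans hpsub (hsubAB _ _ _))
          haafull (haafull qm.2 hbbB) (hxfull qm.2 hbbB).symm
          (hnotinS _ p _ hpsub (hAnotin aa haaA _ _))
          (hnotinS _ p _ hpsub (hBnotin qm.2 hbbB _ _))
        refine buildConc aa haaA qm.2 hbbB hqm2 q _ hq hqsup hpA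
          (le_trans hpsub ?_) (by omega)
        intro w hw
        exact Finset.mem_erase.mpr ⟨(Finset.mem_erase.mp hw).1,
          hsubAB _ _ _ hw⟩
      · -- (ii) : all missing edges end at b₀ ; remove b₀ itself
        push_neg at hbex
        have hm2 : (Miss H (A.erase aa) (B.erase b₀)).card ≤ t - 2 := by
          have hemp : Miss H (A.erase aa) (B.erase b₀) = ∅ := by
            refine Finset.eq_empty_of_forall_notMem (fun q hq => ?_)
            exact (Finset.mem_erase.mp (Miss_snd hq)).1 (hbex q (Miss_erase_subset _ _ hq))
          rw [hemp]
          simp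
        obtain ⟨be, hbeB, hben, hbefull⟩ := exists_full_right (H := H) (A := A) (B := B)
          ({b₀} : Finset V) (by rw [Finset.card_singleton]; omega)
        have hbeb₀ : be ≠ b₀ := by simpa using hben
        obtain ⟨p, hp, hpA, hpsub, hplen⟩ := callIH aa haaA b₀ hb₀ hm2 ha1 ha2 be
          (Finset.mem_erase.mpr ⟨hbeb₀, hbeB⟩)
        obtain ⟨q, hq, hqsup, hqlen⟩ := insert_pair_at_left (nA := aa) (nB := be) hAA hp
          (by omega) (List.mem_toFinset.mp (hpA (Finset.mem_erase.mpr ⟨ha1, ha₁⟩))) ha₁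
          (le_trans hpsub (hsubAB _ _ _))
          haafull (haafull be hbeB) (hbefull a₁ ha₁).symm
          (hnotinS _ p _ hpsub (hAnotin aa haaA _ _))
          (hnotinS _ p _ hpsub (by
            intro h
            exact (Finset.mem_erase.mp h).1 rfl))
        refine buildConc aa haaA be hbeB hbeb₀ q _ hq hqsup hpA
          (le_trans hpsub ?_) (by omega)
        intro w hw
        have hw' := Finset.mem_of_mem_erase hw
        rcases Finset.mem_union.mp hw' with h' | h'
        · exact Finset.mem_erase.mpr ⟨hABne w (Finset.mem_of_mem_erase h') b₀ hb₀,
            Finset.mem_union_left _ (Finset.mem_of_mem_erase h')⟩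
        · exact Finset.mem_erase.mpr ⟨(Finset.mem_erase.mp h').1,
            Finset.mem_union_right _ (Finset.mem_of_mem_erase h')⟩
    · -- (iii) : every vertex of A outside {a₁, a₂} is nonfull
      push_neg at hFA
      obtain ⟨aa, haaA, haan⟩ := exists_mem_not_mem (A := A) ({a₁, a₂} : Finset V)
        (by have := Finset.card_le_two (a := a₁) (b := a₂); omega)
      have ha1 : a₁ ≠ aa := fun h => haan (by simp [h.symm])
      have ha2 : a₂ ≠ aa := fun h => haan (by simp [h.symm])
      obtain ⟨x, hxB, hxn⟩ := hFA aa haaA haan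
      have hax : (aa, x) ∈ Miss H A B := mem_Miss haaA hxB hxn
      by_cases ht2 : 3 ≤ t
      · -- general case
        have hNFsub : A \ {a₁, a₂} ⊆ (Miss H A B).image Prod.fst := by
          intro w hw
          rw [Finset.mem_sdiff] at hw
          obtain ⟨y, hy, hyn⟩ := hFA w hw.1 hw.2
          exact Finset.mem_image.mpr ⟨(w, y), mem_Miss hw.1 hy hyn, rfl⟩
        have hpair : ({a₁, a₂} : Finset V).card = 2 := by
          rw [Finset.card_insert_of_notMem (by simp [hne]), Finset.card_singleton]
        have hNFcard : (A \ {a₁, a₂}).card = t - 1 := by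
          rw [Finset.card_sdiff_of_subset (by intro w hw; simp at hw; rcases hw with rfl | rfl
                                              exacts [ha₁, ha₂]), hA, hpair]
          omega
        have himgcard : ((Miss H A B).image Prod.fst).card = (Miss H A B).card := by
          have h1 := Finset.card_le_card hNFsub
          have h2 := Finset.card_image_le (s := Miss H A B) (f := Prod.fst)
          omega
        have hinj := Finset.card_image_iff.mp himgcard
        have haauniq : ∀ y ∈ B, y ≠ x → H.Adj aa y := by
          intro y hy hyx
          by_contra hc
          have h1 : (aa, y) ∈ Miss H A B := mem_Miss haaA hy hc
          have := hinj (Finset.mem_coe.mpr h1) (Finset.mem_coe.mpr hax) rfl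
          exact hyx (congrArg Prod.snd this)
        obtain ⟨bb, hbbB, hbbn, hbbfull⟩ := exists_full_right (H := H) (A := A) (B := B)
          ({b₀} : Finset V) (by rw [Finset.card_singleton]; omega)
        have hbbb₀ : bb ≠ b₀ := by simpa using hbbn
        have hm2 : (Miss H (A.erase aa) (B.erase bb)).card ≤ t - 2 := by
          have := Miss_erase_card_lt (a := aa) (b := bb) hax (Or.inl rfl)
          omega
        obtain ⟨p, hp, hpA, hpsub, hplen⟩ := callIH aa haaA bb hbbB hm2 ha1 ha2 b₀
          (Finset.mem_erase.mpr ⟨fun h => hbbb₀ h.symm, hb₀⟩)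
        have hScard : p.support.toFinset.card = 2 * t - 1 := by
          rw [support_toFinset_card hp, hplen]; omega
        have hSeq : p.support.toFinset = (A.erase aa) ∪ (p.support.toFinset ∩ B.erase bb) := by
          ext w
          constructor
          · intro hw
            rcases Finset.mem_union.mp (Finset.mem_of_mem_erase (hpsub hw)) with h' | h'
            · exact Finset.mem_union_left _ h'
            · exact Finset.mem_union_right _ (Finset.mem_inter.mpr ⟨hw, h'⟩)
          · intro hw
            rcases Finset.mem_union.mp hw with h' | h'
            · exact hpA h'
            · exact (Finset.mem_inter.mp h').1
        have hdisj2 : Disjoint (A.erase aa) (p.support.toFinset ∩ B.erase bb) := by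
          refine Finset.disjoint_left.mpr (fun w hw hw' => ?_)
          exact (Finset.disjoint_left.mp hd (Finset.mem_of_mem_erase hw))
            (Finset.mem_of_mem_erase (Finset.mem_inter.mp hw').2)
        have hcard2 : (p.support.toFinset ∩ B.erase bb).card = t - 1 := by
          have hu := Finset.card_union_of_disjoint hdisj2
          rw [← hSeq, hScard, Finset.card_erase_of_mem haaA, hA] at hu
          omega
        obtain ⟨c, hcS, hcx⟩ : ∃ c ∈ p.support.toFinset ∩ B.erase bb, c ≠ x := by
          obtain ⟨c, hc1, hc2⟩ := exists_mem_not_mem (A := p.support.toFinset ∩ B.erase bb)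
            ({x} : Finset V) (by rw [Finset.card_singleton]; omega)
          exact ⟨c, hc1, by simpa using hc2⟩
        have hcB : c ∈ B := Finset.mem_of_mem_erase (Finset.mem_inter.mp hcS).2
        obtain ⟨q, hq, hqsup, hqlen⟩ := insert_pair_at_right (nA := aa) (nB := bb) hBB hp
          (by omega) (List.mem_toFinset.mp (Finset.mem_inter.mp hcS).1) hcB
          (le_trans hpsub (hsubAB _ _ _))
          (fun y hy => hbbfull y hy) (hbbfull aa haaA) (haauniq c hcB hcx)
          (hnotinS _ p _ hpsub (hAnotin aa haaA _ _))
          (hnotinS _ p _ hpsub (hBnotin bb hbbB _ _))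
        refine buildConc aa haaA bb hbbB hbbb₀ q _ hq hqsup hpA
          (le_trans hpsub ?_) (by omega)
        intro w hw
        exact Finset.mem_erase.mpr ⟨(Finset.mem_erase.mp hw).1, hsubAB _ _ _ hw⟩
      · -- t = 2 : explicit construction
        have ht2' : t = 2 := by omega
        subst ht2'
        have huniq : ∀ q ∈ Miss H A B, q = (aa, x) := by
          intro q hq
          obtain ⟨e, he⟩ := Finset.card_eq_one.mp (by omega : (Miss H A B).card = 1)
          rw [he] at hq hax
          rw [Finset.mem_singleton] at hq hax
          rw [hq, hax]
        have hadj : ∀ u ∈ A, ∀ y ∈ B, (u ≠ aa ∨ y ≠ x) → H.Adj u y := by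
          intro u hu y hy hor
          refine Miss_adj hu hy (fun hmem => ?_)
          have := huniq _ hmem
          rw [Prod.ext_iff] at this
          rcases hor with h | h
          · exact h this.1
          · exact h this.2
        have hcc : 1 < (B \ {b₀, x}).card := by
          have h1 := Finset.le_card_sdiff ({b₀, x} : Finset V) B
          have h2 := Finset.card_le_two (a := b₀) (b := x)
          omega
        obtain ⟨c, hc, c', hc', hccne⟩ := Finset.one_lt_card.mp hcc
        rw [Finset.mem_sdiff] at hc hc'
        have hcB : c ∈ B := hc.1
        have hc'B : c' ∈ B := hc'.1
        have hcb₀ : c ≠ b₀ := fun h => hc.2 (by simp [h])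
        have hcx : c ≠ x := fun h => hc.2 (by simp [h])
        have hc'b₀ : c' ≠ b₀ := fun h => hc'.2 (by simp [h])
        have hc'x : c' ≠ x := fun h => hc'.2 (by simp [h])
        let p : H.Walk a₁ a₂ :=
          Walk.cons (hadj a₁ ha₁ c hcB (Or.inl ha1))
            (Walk.cons (hadj aa haaA c hcB (Or.inr hcx)).symm
              (Walk.cons (hadj aa haaA c' hc'B (Or.inr hc'x))
                (Walk.cons (hadj a₂ ha₂ c' hc'B (Or.inl ha2)).symm Walk.nil)))
        have hsup : p.support = [a₁, c, aa, c', a₂] := by simp [p]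
        refine ⟨p, ?_, ?_, ?_, by simp [p]⟩
        · rw [Walk.isPath_def, hsup]
          simp only [List.nodup_cons, List.mem_cons, List.not_mem_nil, or_false,
            List.nodup_nil, and_true, List.mem_singleton]
          refine ⟨?_, ?_, ?_, ?_⟩
          · push_neg
            exact ⟨hABne a₁ ha₁ c hcB, ha1, hABne a₁ ha₁ c' hc'B, hne⟩
          · push_neg
            exact ⟨fun h => hABne aa haaA c hcB h.symm, hccne,
              fun h => hABne a₂ ha₂ c hcB h.symm⟩
          · push_neg
            exact ⟨hABne aa haaA c' hc'B, fun h => ha2 h.symm⟩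
          · exact ⟨fun h => hABne a₂ ha₂ c' hc'B h.symm, not_false⟩
        · intro w hw
          rw [hsup]
          have hAeq : A = {a₁, aa, a₂} := by
            refine (Finset.eq_of_subset_of_card_le ?_ ?_).symm
            · intro z hz; simp at hz; rcases hz with rfl | rfl | rfl
              exacts [ha₁, haaA, ha₂]
            · rw [hA]
              have h3 : ({a₁, aa, a₂} : Finset V).card = 3 := by
                rw [Finset.card_insert_of_notMem (by simp; exact ⟨ha1, hne⟩),
                  Finset.card_insert_of_notMem (by simp; exact fun h => ha2 h.symm),
                  Finset.card_singleton]
              omega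
          rw [hAeq] at hw
          simp at hw ⊢
          tauto
        · intro w hw
          rw [hsup] at hw
          simp at hw
          rw [Finset.mem_erase, Finset.mem_union]
          rcases hw with rfl | rfl | rfl | rfl | rfl
          · exact ⟨hABne w ha₁ b₀ hb₀, Or.inl ha₁⟩
          · exact ⟨hcb₀, Or.inr hcB⟩
          · exact ⟨hABne w haaA b₀ hb₀, Or.inl haaA⟩
          · exact ⟨hc'b₀, Or.inr hc'B⟩
          · exact ⟨hABne w ha₂ b₀ hb₀, Or.inl ha₂⟩
end Step


section Step2
variable {H : SimpleGraph V} {A B : Finset V}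

lemma set_insert_eq2 (hd : Disjoint A B) {aa be b₀ : V} (ha : aa ∈ A) (hbe : be ∈ B)
    (hb₀ : b₀ ∈ B) (h1 : be ≠ b₀) (h2 : aa ≠ b₀) :
    insert aa (insert be (((A.erase aa) ∪ (B.erase b₀)).erase be)) = (A ∪ B).erase b₀ := by
  ext w
  simp only [Finset.mem_insert, Finset.mem_erase, Finset.mem_union]
  constructor
  · rintro (rfl | rfl | ⟨hwbe, (⟨hwa, hwA⟩ | ⟨hwb, hwB⟩)⟩)
    · exact ⟨h2, Or.inl ha⟩
    · exact ⟨h1, Or.inr hbe⟩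
    · exact ⟨fun h => (Finset.disjoint_left.mp hd hwA) (h ▸ hb₀), Or.inl hwA⟩
    · exact ⟨hwb, Or.inr hwB⟩
  · rintro ⟨hw0, hw | hw⟩
    · by_cases hwa : w = aa
      · exact Or.inl hwa
      · by_cases hwbe : w = be
        · exact Or.inr (Or.inl hwbe)
        · exact Or.inr (Or.inr ⟨hwbe, Or.inl ⟨hwa, hw⟩⟩)
    · by_cases hwbe : w = be
      · exact Or.inr (Or.inl hwbe)
      · by_cases hwa : w = aa
        · exact Or.inl hwa
        · exact Or.inr (Or.inr ⟨hwbe, Or.inr ⟨hw0, hw⟩⟩)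

lemma good2_step {t : ℕ} (ht : 2 ≤ t) (ih : Good2 H t) : Good2 H (t + 1) := by
  intro A B hd hA hB hAA hBB hm a ha b hb b₀ hb₀ hb₀b
  have hm' : (Miss H A B).card ≤ t - 1 := by omega
  have hABne : ∀ x ∈ A, ∀ y ∈ B, x ≠ y := by
    intro x hx y hy h
    exact (Finset.disjoint_left.mp hd hx) (h ▸ hy)
  have callIH : ∀ aa ∈ A, ∀ bb ∈ B, (Miss H (A.erase aa) (B.erase bb)).card ≤ t - 2 →
      a ≠ aa → b ≠ bb → ∀ b₀' ∈ B.erase bb, b₀' ≠ b →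
      ∃ p : H.Walk a b, p.IsPath ∧
        p.support.toFinset = ((A.erase aa) ∪ (B.erase bb)).erase b₀' ∧ p.length = 2 * t - 1 := by
    intro aa haa bb hbb hm2 h1 h2 b₀' hb₀' hb₀'b
    refine ih (A.erase aa) (B.erase bb)
      (Finset.disjoint_of_subset_left (Finset.erase_subset _ _)
        (Finset.disjoint_of_subset_right (Finset.erase_subset _ _) hd))
      (by rw [Finset.card_erase_of_mem haa, hA]; omega)
      (by rw [Finset.card_erase_of_mem hbb, hB]; omega)
      (fun x hx y hy => hAA x (Finset.mem_of_mem_erase hx) y (Finset.mem_of_mem_erase hy))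
      (fun x hx y hy => hBB x (Finset.mem_of_mem_erase hx) y (Finset.mem_of_mem_erase hy))
      hm2 a (Finset.mem_erase.mpr ⟨h1, ha⟩) b (Finset.mem_erase.mpr ⟨h2, hb⟩) b₀' hb₀' hb₀'b
  have hnotinS : ∀ (w : V) {u v : V} (p : H.Walk u v) (T : Finset V),
      p.support.toFinset ⊆ T → w ∉ T → w ∉ p.support :=
    fun w u v p T hsub hw h => hw (hsub (List.mem_toFinset.mpr h))
  have hAnotin : ∀ aa ∈ A, ∀ (bb c : V), aa ∉ ((A.erase aa) ∪ (B.erase bb)).erase c := by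
    intro aa haa bb c h
    rcases Finset.mem_union.mp (Finset.mem_of_mem_erase h) with h' | h'
    · exact (Finset.notMem_erase aa A) h'
    · exact (Finset.disjoint_left.mp hd haa) (Finset.mem_of_mem_erase h')
  have hBnotin : ∀ bb ∈ B, ∀ (aa c : V), bb ∉ ((A.erase aa) ∪ (B.erase bb)).erase c := by
    intro bb hbb aa c h
    rcases Finset.mem_union.mp (Finset.mem_of_mem_erase h) with h' | h'
    · exact (Finset.disjoint_right.mp hd hbb) (Finset.mem_of_mem_erase h')
    · exact (Finset.notMem_erase bb B) h'
  have hsubAB : ∀ (aa bb c : V), ((A.erase aa) ∪ (B.erase bb)).erase c ⊆ A ∪ B := by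
    intro aa bb c w hw
    rcases Finset.mem_union.mp (Finset.mem_of_mem_erase hw) with h' | h'
    · exact Finset.mem_union_left _ (Finset.mem_of_mem_erase h')
    · exact Finset.mem_union_right _ (Finset.mem_of_mem_erase h')
  by_cases hc1 : (Miss H A B).card ≤ t - 2
  -- ===== Branch I =====
  · obtain ⟨aa, haaA, haan, haafull⟩ := exists_full_left (H := H) (A := A) (B := B)
      ({a} : Finset V) (by rw [Finset.card_singleton]; omega)
    obtain ⟨bb, hbbB, hbbn, hbbfull⟩ := exists_full_right (H := H) (A := A) (B := B)
      ({b, b₀} : Finset V) (by have := Finset.card_le_two (a := b) (b := b₀); omega)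
    have haa_a : a ≠ aa := fun h => haan (by simp [h.symm])
    have hbb_b : b ≠ bb := fun h => hbbn (by simp [h.symm])
    have hbb_b₀ : bb ≠ b₀ := fun h => hbbn (by simp [h])
    have hm2 : (Miss H (A.erase aa) (B.erase bb)).card ≤ t - 2 :=
      le_trans (Finset.card_le_card (Miss_erase_subset _ _)) hc1
    obtain ⟨p, hp, hpsup, hplen⟩ := callIH aa haaA bb hbbB hm2 haa_a hbb_b b₀
      (Finset.mem_erase.mpr ⟨fun h => hbb_b₀ h.symm, hb₀⟩) hb₀b
    have haS : a ∈ p.support := by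
      rw [← List.mem_toFinset, hpsup]
      exact Finset.mem_erase.mpr ⟨hABne a ha b₀ hb₀,
        Finset.mem_union_left _ (Finset.mem_erase.mpr ⟨haa_a, ha⟩)⟩
    have hpsub : p.support.toFinset ⊆ ((A.erase aa) ∪ (B.erase bb)).erase b₀ :=
      fun w hw => by rw [hpsup] at hw; exact hw
    obtain ⟨q, hq, hqsup, hqlen⟩ := insert_pair_at_left (nA := aa) (nB := bb) hAA hp
      (by omega) haS ha (fun w hw => hsubAB _ _ _ (hpsub hw))
      haafull (haafull bb hbbB) (hbbfull a ha).symm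
      (hnotinS _ p _ hpsub (hAnotin aa haaA _ _))
      (hnotinS _ p _ hpsub (hBnotin bb hbbB _ _))
    refine ⟨q, hq, ?_, by omega⟩
    rw [hqsup, hpsup]
    exact set_insert_eq1 haaA hbbB hb₀ (hABne aa haaA b₀ hb₀) hbb_b₀
  -- ===== Branch II =====
  · have hmeq : (Miss H A B).card = t - 1 := by omega
    by_cases hbex : ∃ q ∈ Miss H A B, q.2 ∉ ({b, b₀} : Finset V)
    · -- (II.a) remove nonfull bb ∉ {b, b₀}, full aa
      obtain ⟨qm, hqm, hqmn⟩ := hbex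
      have hbbB : qm.2 ∈ B := Miss_snd hqm
      have hbb_b : b ≠ qm.2 := fun h => hqmn (by simp [h.symm])
      have hbb_b₀ : qm.2 ≠ b₀ := fun h => hqmn (by simp [h])
      obtain ⟨aa, haaA, haan, haafull⟩ := exists_full_left (H := H) (A := A) (B := B)
        ({a} : Finset V) (by rw [Finset.card_singleton]; omega)
      have haa_a : a ≠ aa := fun h => haan (by simp [h.symm])
      have hm2 : (Miss H (A.erase aa) (B.erase qm.2)).card ≤ t - 2 := by
        have := Miss_erase_card_lt (a := aa) (b := qm.2) hqm (Or.inr rfl)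
        omega
      obtain ⟨p, hp, hpsup, hplen⟩ := callIH aa haaA qm.2 hbbB hm2 haa_a hbb_b b₀
        (Finset.mem_erase.mpr ⟨fun h => hbb_b₀ h.symm, hb₀⟩) hb₀b
      obtain ⟨x, hxA, hxn, hxfull⟩ := exists_full_left (H := H) (A := A) (B := B)
        ({aa} : Finset V) (by rw [Finset.card_singleton]; omega)
      have hxaa : x ≠ aa := by simpa using hxn
      have hxS : x ∈ p.support := by
        rw [← List.mem_toFinset, hpsup]
        exact Finset.mem_erase.mpr ⟨hABne x hxA b₀ hb₀,
          Finset.mem_union_left _ (Finset.mem_erase.mpr ⟨hxaa, hxA⟩)⟩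
      have hpsub : p.support.toFinset ⊆ ((A.erase aa) ∪ (B.erase qm.2)).erase b₀ :=
        fun w hw => by rw [hpsup] at hw; exact hw
      obtain ⟨q, hq, hqsup, hqlen⟩ := insert_pair_at_left (nA := aa) (nB := qm.2) hAA hp
        (by omega) hxS hxA (fun w hw => hsubAB _ _ _ (hpsub hw))
        haafull (haafull qm.2 hbbB) (hxfull qm.2 hbbB).symm
        (hnotinS _ p _ hpsub (hAnotin aa haaA _ _))
        (hnotinS _ p _ hpsub (hBnotin qm.2 hbbB _ _))
      refine ⟨q, hq, ?_, by omega⟩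
      rw [hqsup, hpsup]
      exact set_insert_eq1 haaA hbbB hb₀ (hABne aa haaA b₀ hb₀) hbb_b₀
    · push_neg at hbex
      by_cases hb0m : ∃ q ∈ Miss H A B, q.2 = b₀
      · -- (II.b.i) remove b₀ itself, insert a different full vertex be
        obtain ⟨qm, hqm, hqm2⟩ := hb0m
        obtain ⟨aa, haaA, haan, haafull⟩ := exists_full_left (H := H) (A := A) (B := B)
          ({a} : Finset V) (by rw [Finset.card_singleton]; omega)
        have haa_a : a ≠ aa := fun h => haan (by simp [h.symm])
        obtain ⟨be, hbeB, hben, hbefull⟩ := exists_full_right (H := H) (A := A) (B := B)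
          ({b, b₀} : Finset V) (by have := Finset.card_le_two (a := b) (b := b₀); omega)
        have hbe_b : be ≠ b := fun h => hben (by simp [h])
        have hbe_b₀ : be ≠ b₀ := fun h => hben (by simp [h])
        have hm2 : (Miss H (A.erase aa) (B.erase b₀)).card ≤ t - 2 := by
          have := Miss_erase_card_lt (a := aa) (b := b₀) hqm (Or.inr hqm2.symm)
          omega
        obtain ⟨p, hp, hpsup, hplen⟩ := callIH aa haaA b₀ hb₀ hm2 haa_a
          (fun h => hb₀b h.symm) be (Finset.mem_erase.mpr ⟨hbe_b₀, hbeB⟩) hbe_b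
        have haS : a ∈ p.support := by
          rw [← List.mem_toFinset, hpsup]
          exact Finset.mem_erase.mpr ⟨hABne a ha be hbeB,
            Finset.mem_union_left _ (Finset.mem_erase.mpr ⟨haa_a, ha⟩)⟩
        have hpsub : p.support.toFinset ⊆ ((A.erase aa) ∪ (B.erase b₀)).erase be :=
          fun w hw => by rw [hpsup] at hw; exact hw
        obtain ⟨q, hq, hqsup, hqlen⟩ := insert_pair_at_left (nA := aa) (nB := be) hAA hp
          (by omega) haS ha (fun w hw => hsubAB _ _ _ (hpsub hw))
          haafull (haafull be hbeB) (hbefull a ha).symm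
          (hnotinS _ p _ hpsub (hAnotin aa haaA _ _))
          (hnotinS _ p _ hpsub (fun h => (Finset.mem_erase.mp h).1 rfl))
        refine ⟨q, hq, ?_, by omega⟩
        rw [hqsup, hpsup]
        exact set_insert_eq2 hd haaA hbeB hb₀ hbe_b₀ (hABne aa haaA b₀ hb₀)
      · -- (II.b.ii)
        push_neg at hb0m
        have hall2 : ∀ q ∈ Miss H A B, q.2 = b := by
          intro q hq
          have h1 := hbex q hq
          rw [Finset.mem_insert, Finset.mem_singleton] at h1
          rcases h1 with h1 | h1
          · exact h1
          · exact absurd h1 (hb0m q hq)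
        by_cases haex : ∃ q ∈ Miss H A B, q.1 ≠ a
        · -- normal subcase : remove nonfull aa ≠ a and a full bb
          obtain ⟨qm, hqm, hqm1⟩ := haex
          have haaA : qm.1 ∈ A := Miss_fst hqm
          have haa_a : a ≠ qm.1 := fun h => hqm1 h.symm
          have haa_adj : ∀ y ∈ B, y ≠ b → H.Adj qm.1 y := by
            intro y hy hyb
            refine Miss_adj haaA hy (fun hmem => ?_)
            exact hyb (hall2 _ hmem)
          obtain ⟨bb, hbbB, hbbn, hbbfull⟩ := exists_full_right (H := H) (A := A) (B := B)
            ({b, b₀} : Finset V) (by have := Finset.card_le_two (a := b) (b := b₀); omega)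
          have hbb_b : b ≠ bb := fun h => hbbn (by simp [h.symm])
          have hbb_b₀ : bb ≠ b₀ := fun h => hbbn (by simp [h])
          have hm2 : (Miss H (A.erase qm.1) (B.erase bb)).card ≤ t - 2 := by
            have := Miss_erase_card_lt (a := qm.1) (b := bb) hqm (Or.inl rfl)
            omega
          obtain ⟨p, hp, hpsup, hplen⟩ := callIH qm.1 haaA bb hbbB hm2 haa_a hbb_b b₀
            (Finset.mem_erase.mpr ⟨fun h => hbb_b₀ h.symm, hb₀⟩) hb₀b
          obtain ⟨c, hcB, hcn⟩ := exists_mem_not_mem (A := B) ({bb, b₀, b} : Finset V)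
            (by
              have h1 : ({bb, b₀, b} : Finset V).card ≤ 3 :=
                le_trans (Finset.card_insert_le _ _)
                  (by have := Finset.card_le_two (a := b₀) (b := b); omega)
              omega)
          have hc_bb : c ≠ bb := fun h => hcn (by simp [h])
          have hc_b₀ : c ≠ b₀ := fun h => hcn (by simp [h])
          have hc_b : c ≠ b := fun h => hcn (by simp [h])
          have hcS : c ∈ p.support := by
            rw [← List.mem_toFinset, hpsup]
            exact Finset.mem_erase.mpr ⟨hc_b₀,
              Finset.mem_union_right _ (Finset.mem_erase.mpr ⟨hc_bb, hcB⟩)⟩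
          have hpsub : p.support.toFinset ⊆ ((A.erase qm.1) ∪ (B.erase bb)).erase b₀ :=
            fun w hw => by rw [hpsup] at hw; exact hw
          obtain ⟨q, hq, hqsup, hqlen⟩ := insert_pair_at_right (nA := qm.1) (nB := bb) hBB hp
            (by omega) hcS hcB (fun w hw => hsubAB _ _ _ (hpsub hw))
            (fun y hy => hbbfull y hy) (hbbfull qm.1 haaA) (haa_adj c hcB hc_b)
            (hnotinS _ p _ hpsub (hAnotin qm.1 haaA _ _))
            (hnotinS _ p _ hpsub (hBnotin bb hbbB _ _))
          refine ⟨q, hq, ?_, by omega⟩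
          rw [hqsup, hpsup]
          exact set_insert_eq1 haaA hbbB hb₀ (hABne qm.1 haaA b₀ hb₀) hbb_b₀
        · -- degenerate : the only missing edge is (a, b) and t = 2
          push_neg at haex
          have hsub1 : Miss H A B ⊆ {(a, b)} := by
            intro q hq
            rw [Finset.mem_singleton]
            exact Prod.ext (haex q hq) (hall2 q hq)
          have ht2 : t = 2 := by
            have := Finset.card_le_card hsub1
            rw [Finset.card_singleton] at this
            omega
          subst ht2
          have hadj : ∀ u ∈ A, ∀ y ∈ B, (u ≠ a ∨ y ≠ b) → H.Adj u y := by
            intro u hu y hy hor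
            refine Miss_adj hu hy (fun hmem => ?_)
            have := hsub1 hmem
            rw [Finset.mem_singleton, Prod.ext_iff] at this
            rcases hor with h | h
            · exact h this.1
            · exact h this.2
          have hA2 : 1 < (A.erase a).card := by
            rw [Finset.card_erase_of_mem ha, hA]
            omega
          obtain ⟨a', ha', a'', ha'', hane⟩ := Finset.one_lt_card.mp hA2
          have ha'A : a' ∈ A := Finset.mem_of_mem_erase ha'
          have ha''A : a'' ∈ A := Finset.mem_of_mem_erase ha''
          have ha'a : a' ≠ a := (Finset.mem_erase.mp ha').1
          have ha''a : a'' ≠ a := (Finset.mem_erase.mp ha'').1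
          have hcc : 1 < (B \ {b, b₀}).card := by
            have h1 := Finset.le_card_sdiff ({b, b₀} : Finset V) B
            have h2 := Finset.card_le_two (a := b) (b := b₀)
            omega
          obtain ⟨c, hc, c', hc', hccne⟩ := Finset.one_lt_card.mp hcc
          rw [Finset.mem_sdiff] at hc hc'
          have hcB : c ∈ B := hc.1
          have hc'B : c' ∈ B := hc'.1
          have hcb : c ≠ b := fun h => hc.2 (by simp [h])
          have hcb₀ : c ≠ b₀ := fun h => hc.2 (by simp [h])
          have hc'b : c' ≠ b := fun h => hc'.2 (by simp [h])
          have hc'b₀ : c' ≠ b₀ := fun h => hc'.2 (by simp [h])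
          -- walk  a  c  a'  c'  a''  b
          let p : H.Walk a b :=
            Walk.cons (hadj a ha c hcB (Or.inr hcb))
              (Walk.cons (hadj a' ha'A c hcB (Or.inl ha'a)).symm
                (Walk.cons (hadj a' ha'A c' hc'B (Or.inl ha'a))
                  (Walk.cons (hadj a'' ha''A c' hc'B (Or.inl ha''a)).symm
                    (Walk.cons (hadj a'' ha''A b hb (Or.inl ha''a)) Walk.nil))))
          have hsup : p.support = [a, c, a', c', a'', b] := by simp [p]
          refine ⟨p, ?_, ?_, by simp [p]⟩
          · rw [Walk.isPath_def, hsup]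
            simp only [List.nodup_cons, List.mem_cons, List.not_mem_nil, or_false,
              List.nodup_nil, and_true, List.mem_singleton]
            refine ⟨?_, ?_, ?_, ?_, ?_⟩
            · push_neg
              exact ⟨hABne a ha c hcB, fun h => ha'a h.symm, hABne a ha c' hc'B,
                fun h => ha''a h.symm, hABne a ha b hb⟩
            · push_neg
              exact ⟨fun h => hABne a' ha'A c hcB h.symm, hccne,
                fun h => hABne a'' ha''A c hcB h.symm, hcb⟩
            · push_neg
              exact ⟨hABne a' ha'A c' hc'B, hane, hABne a' ha'A b hb⟩
            · push_neg
              exact ⟨fun h => hABne a'' ha''A c' hc'B h.symm, hc'b⟩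
            · simpa using hABne a'' ha''A b hb
          · have hAeq : A = {a, a', a''} := by
              refine (Finset.eq_of_subset_of_card_le ?_ ?_).symm
              · intro z hz; simp at hz; rcases hz with rfl | rfl | rfl
                exacts [ha, ha'A, ha''A]
              · rw [hA]
                have h3 : ({a, a', a''} : Finset V).card = 3 := by
                  rw [Finset.card_insert_of_notMem (by
                        simp; exact ⟨fun h => ha'a h.symm, fun h => ha''a h.symm⟩),
                    Finset.card_insert_of_notMem (by simp; exact hane),
                    Finset.card_singleton]
                omega
            have hBeq : B = {b, b₀, c, c'} := by
              refine (Finset.eq_of_subset_of_card_le ?_ ?_).symm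
              · intro z hz; simp at hz; rcases hz with rfl | rfl | rfl | rfl
                exacts [hb, hb₀, hcB, hc'B]
              · rw [hB]
                have h4 : ({b, b₀, c, c'} : Finset V).card = 4 := by
                  rw [Finset.card_insert_of_notMem (by
                        simp; exact ⟨fun h => hb₀b h.symm, fun h => hcb h.symm,
                          fun h => hc'b h.symm⟩),
                    Finset.card_insert_of_notMem (by
                        simp; exact ⟨fun h => hcb₀ h.symm, fun h => hc'b₀ h.symm⟩),
                    Finset.card_insert_of_notMem (by simp; exact hccne),
                    Finset.card_singleton]
                omega
            rw [hsup, hAeq, hBeq]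
            ext w
            simp only [List.toFinset_cons, List.toFinset_nil, LawfulSingleton.insert_empty_eq,
              Finset.mem_insert, Finset.mem_erase, Finset.mem_union, Finset.mem_singleton]
            constructor
            · rintro (rfl | rfl | rfl | rfl | rfl | rfl)
              · exact ⟨hABne w ha b₀ hb₀, by tauto⟩
              · exact ⟨hcb₀, by tauto⟩
              · exact ⟨hABne w ha'A b₀ hb₀, by tauto⟩
              · exact ⟨hc'b₀, by tauto⟩
              · exact ⟨hABne w ha''A b₀ hb₀, by tauto⟩
              · exact ⟨fun h => hb₀b h.symm, by tauto⟩
            · rintro ⟨h1, (rfl | rfl | rfl) | (rfl | rfl | rfl | rfl)⟩ <;> tauto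
end Step2


section Final
variable {H : SimpleGraph V} {A B : Finset V}

lemma good1_of_good2 {t : ℕ} (ht : 2 ≤ t) (h2 : Good2 H t) :
    ∀ A B : Finset V, Disjoint A B → A.card = t → B.card = t + 1 →
    (∀ x ∈ A, ∀ y ∈ A, ¬H.Adj x y) → (∀ x ∈ B, ∀ y ∈ B, ¬H.Adj x y) →
    (Miss H A B).card ≤ t - 2 →
    ∀ b₁ ∈ B, ∀ b₂ ∈ B, b₁ ≠ b₂ →
      ∃ p : H.Walk b₁ b₂, p.IsPath ∧ p.length = 2 * t := by
  intro A B hd hA hB hAA hBB hm b₁ hb₁ b₂ hb₂ hne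
  obtain ⟨a, ha, _, hafull⟩ := exists_full_left (H := H) (A := A) (B := B)
    (∅ : Finset V) (by rw [Finset.card_empty]; omega)
  obtain ⟨p, hp, hpsup, hplen⟩ := h2 A B hd hA hB hAA hBB hm a ha b₂ hb₂ b₁ hb₁ hne
  have hb₁n : b₁ ∉ p.support := by
    intro h
    have := List.mem_toFinset.mpr h
    rw [hpsup] at this
    exact (Finset.mem_erase.mp this).1 rfl
  refine ⟨Walk.cons (hafull b₁ hb₁).symm p, (Walk.cons_isPath_iff _ p).mpr ⟨hp, hb₁n⟩, ?_⟩
  rw [Walk.length_cons, hplen]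
  omega

end Final

lemma good2_all {H : SimpleGraph V} (t : ℕ) (ht : 2 ≤ t) : Good2 H t := by
  induction t, ht using Nat.le_induction with
  | base => exact good2_base
  | succ n hn ih => exact good2_step hn ih

lemma good3_all {H : SimpleGraph V} (t : ℕ) (ht : 2 ≤ t) : Good3 H t := by
  induction t, ht using Nat.le_induction with
  | base => exact good3_base
  | succ n hn ih => exact good3_step hn ih

/-- Let `t ≥ 2` and let `H` be a subgraph of `K_{t,t+1}` (with parts
`A = Fin t` and `B = Fin (t+1)`) obtained by deleting at most `t - 2` edges,
i.e. having at least `t(t+1) - (t-2)` edges.  Then any two distinct vertices of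
`B` are joined in `H` by a path of length `2t`, any vertex of `A` and any vertex
of `B` are joined by a path of length `2t - 1`, and any two distinct vertices of
`A` are joined by a path of length `2t - 2`. -/
theorem stmt_17 (t : ℕ) (ht : 2 ≤ t) (H : SimpleGraph (Fin t ⊕ Fin (t + 1)))
    (hH : H ≤ completeBipartiteGraph (Fin t) (Fin (t + 1)))
    (he : t * (t + 1) - (t - 2) ≤ H.edgeSet.ncard) :
    (∀ b₁ b₂ : Fin (t + 1), b₁ ≠ b₂ →
      ∃ p : H.Walk (Sum.inr b₁) (Sum.inr b₂), p.IsPath ∧ p.length = 2 * t) ∧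
    (∀ (a : Fin t) (b : Fin (t + 1)),
      ∃ p : H.Walk (Sum.inl a) (Sum.inr b), p.IsPath ∧ p.length = 2 * t - 1) ∧
    (∀ a₁ a₂ : Fin t, a₁ ≠ a₂ →
      ∃ p : H.Walk (Sum.inl a₁) (Sum.inl a₂), p.IsPath ∧ p.length = 2 * t - 2) := by
  classical
  set A : Finset (Fin t ⊕ Fin (t + 1)) := Finset.univ.map ⟨Sum.inl, Sum.inl_injective⟩
    with hAdef
  set B : Finset (Fin t ⊕ Fin (t + 1)) := Finset.univ.map ⟨Sum.inr, Sum.inr_injective⟩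
    with hBdef
  have hmemA : ∀ x : Fin t, Sum.inl x ∈ A := by
    intro x; simp [hAdef]
  have hmemB : ∀ x : Fin (t + 1), Sum.inr x ∈ B := by
    intro x; simp [hBdef]
  have hformA : ∀ x ∈ A, ∃ a : Fin t, x = Sum.inl a := by
    intro x hx
    simp only [hAdef, Finset.mem_map, Function.Embedding.coeFn_mk] at hx
    obtain ⟨a, _, rfl⟩ := hx
    exact ⟨a, rfl⟩
  have hformB : ∀ x ∈ B, ∃ b : Fin (t + 1), x = Sum.inr b := by
    intro x hx
    simp only [hBdef, Finset.mem_map, Function.Embedding.coeFn_mk] at hx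
    obtain ⟨b, _, rfl⟩ := hx
    exact ⟨b, rfl⟩
  have hd : Disjoint A B := by
    rw [Finset.disjoint_left]
    intro x hx hx'
    obtain ⟨a, rfl⟩ := hformA x hx
    obtain ⟨b, hb⟩ := hformB _ hx'
    exact Sum.inl_ne_inr hb
  have hA : A.card = t := by simp [hAdef]
  have hB : B.card = t + 1 := by simp [hBdef]
  have hAA : ∀ x ∈ A, ∀ y ∈ A, ¬H.Adj x y := by
    intro x hx y hy hadj
    obtain ⟨a, rfl⟩ := hformA x hx
    obtain ⟨a', rfl⟩ := hformA y hy
    have := hH hadj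
    simp [completeBipartiteGraph] at this
  have hBB : ∀ x ∈ B, ∀ y ∈ B, ¬H.Adj x y := by
    intro x hx y hy hadj
    obtain ⟨b, rfl⟩ := hformB x hx
    obtain ⟨b', rfl⟩ := hformB y hy
    have := hH hadj
    simp [completeBipartiteGraph] at this
  -- edge counting
  have hset : H.edgeSet =
      ↑(((A ×ˢ B).filter (fun p => H.Adj p.1 p.2)).image (fun p => s(p.1, p.2))) := by
    ext e
    induction e with
    | _ x y =>
      simp only [SimpleGraph.mem_edgeSet, Finset.coe_image, Set.mem_image, Finset.mem_coe,
        Finset.mem_filter, Finset.mem_product]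
      constructor
      · intro hadj
        have hcb := hH hadj
        rcases x with a | a <;> rcases y with b | b
        · simp [completeBipartiteGraph] at hcb
        · exact ⟨(Sum.inl a, Sum.inr b), ⟨⟨hmemA a, hmemB b⟩, hadj⟩, rfl⟩
        · exact ⟨(Sum.inl b, Sum.inr a), ⟨⟨hmemA b, hmemB a⟩, hadj.symm⟩, Sym2.eq_swap⟩
        · simp [completeBipartiteGraph] at hcb
      · rintro ⟨p, ⟨⟨hp1, hp2⟩, hadj⟩, heq⟩
        rw [Sym2.eq_iff] at heq
        rcases heq with ⟨rfl, rfl⟩ | ⟨rfl, rfl⟩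
        · exact hadj
        · exact hadj.symm
  have hinj : Set.InjOn (fun p : (Fin t ⊕ Fin (t + 1)) × (Fin t ⊕ Fin (t + 1)) => s(p.1, p.2))
      ↑((A ×ˢ B).filter (fun p => H.Adj p.1 p.2)) := by
    intro p hp q hq heq
    simp only [Finset.mem_coe, Finset.mem_filter, Finset.mem_product] at hp hq
    obtain ⟨a1, hp1⟩ := hformA p.1 hp.1.1
    obtain ⟨b1, hp2⟩ := hformB p.2 hp.1.2
    obtain ⟨a2, hq1⟩ := hformA q.1 hq.1.1
    obtain ⟨b2, hq2⟩ := hformB q.2 hq.1.2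
    simp only [Sym2.eq_iff] at heq
    rcases heq with ⟨h1, h2⟩ | ⟨h1, h2⟩
    · exact Prod.ext h1 h2
    · rw [hp1, hq2] at h1
      exact absurd h1 (Sum.inl_ne_inr)
  have hncard : H.edgeSet.ncard = ((A ×ˢ B).filter (fun p => H.Adj p.1 p.2)).card := by
    rw [hset, Set.ncard_coe_finset, Finset.card_image_of_injOn hinj]
  have hsum : ((A ×ˢ B).filter (fun p => H.Adj p.1 p.2)).card + (Miss H A B).card
      = t * (t + 1) := by
    rw [Miss]
    rw [Finset.card_filter_add_card_filter_not]
    rw [Finset.card_product, hA, hB]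
  have hm : (Miss H A B).card ≤ t - 2 := by
    rw [hncard] at he
    omega
  refine ⟨?_, ?_, ?_⟩
  · intro b₁ b₂ hne
    obtain ⟨p, hp, hlen⟩ := good1_of_good2 ht (good2_all t ht) A B hd hA hB hAA hBB hm
      (Sum.inr b₁) (hmemB b₁) (Sum.inr b₂) (hmemB b₂) (fun h => hne (Sum.inr_injective h))
    exact ⟨p, hp, hlen⟩
  · intro a b
    have h3 : 1 < Fintype.card (Fin (t + 1)) := by simp; omega
    obtain ⟨b', hb'⟩ := Fintype.exists_ne_of_one_lt_card h3 b
    obtain ⟨p, hp, _, hlen⟩ := good2_all t ht A B hd hA hB hAA hBB hm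
      (Sum.inl a) (hmemA a) (Sum.inr b) (hmemB b) (Sum.inr b') (hmemB b')
      (fun h => hb' (Sum.inr_injective h))
    exact ⟨p, hp, hlen⟩
  · intro a₁ a₂ hne
    obtain ⟨p, hp, _, _, hlen⟩ := good3_all t ht A B hd hA hB hAA hBB hm
      (Sum.inl a₁) (hmemA a₁) (Sum.inl a₂) (hmemA a₂)
      (fun h => hne (Sum.inl_injective h)) (Sum.inr 0) (hmemB 0)
    exact ⟨p, hp, hlen⟩
end
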